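/- arXiv:2106.01926 — 5 statements merged into one kernel-verified Lean document; each statement's English description precedes it below -/
import Mathlib

section
/- If S is skew-symmetric, i.e. Sᵀ = −S, then H(σ(h)) = H(σ(0)). -/
open Matrix

/-- For the problem `ẏ = S ∇H(y)` with `S` skew-symmetric (`Sᵀ = −S`), the polynomial
approximation `σ` of degree `≤ s` satisfying
`σ(ch) = σ(0) + h ∑_{j<s} (∫₀^c P_j) S β_j(σ)`, `β_j(σ) = ∫₀¹ P_j(ζ) ∇H(σ(ζh)) dζ`,
conserves the Hamiltonian: `H(σ(h)) = H(σ(0))`. -/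
theorem stmt4
    (P : ℕ → Polynomial ℝ)
    (hPdeg : ∀ j, (P j).natDegree = j)
    (hPlead : ∀ j, 0 < (P j).leadingCoeff)
    (hPorth : ∀ i j : ℕ,
      (∫ x in (0:ℝ)..1, (P i).eval x * (P j).eval x) = if i = j then (1:ℝ) else 0)
    (m s : ℕ) (hm : 1 ≤ m) (hs : 1 ≤ s)
    (S : Matrix (Fin m) (Fin m) ℝ)
    (H : (Fin m → ℝ) → ℝ) (gradH : (Fin m → ℝ) → (Fin m → ℝ))
    (hH1 : ContDiff ℝ 1 H)
    (hgrad : ∀ x : Fin m → ℝ,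
      HasFDerivAt H (∑ i : Fin m, gradH x i •
        (ContinuousLinearMap.proj i : (Fin m → ℝ) →L[ℝ] ℝ)) x)
    (h : ℝ) (hh : 0 < h)
    (σ : ℝ → Fin m → ℝ)
    (hσpoly : ∀ i : Fin m,
      ∃ p : Polynomial ℝ, p.natDegree ≤ s ∧ ∀ t : ℝ, σ t i = p.eval t)
    (hσeq : ∀ c ∈ Set.Icc (0:ℝ) 1,
      σ (c * h) = σ 0 + h • ∑ j ∈ Finset.range s,
        (∫ x in (0:ℝ)..c, (P j).eval x) •
          S.mulVec (∫ ζ in (0:ℝ)..1, (P j).eval ζ • gradH (σ (ζ * h))))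
    (hskew : Sᵀ = -S) :
    H (σ h) = H (σ 0) := by
  classical
  -- continuity of σ
  have hσcont : Continuous σ := by
    apply continuous_pi
    intro i
    obtain ⟨p, _, hp⟩ := hσpoly i
    have : (fun t => σ t i) = fun t => p.eval t := funext hp
    rw [this]; exact p.continuous
  -- gradH in terms of fderiv, and its continuity
  have hfd : ∀ x, fderiv ℝ H x = ∑ i, gradH x i •
      (ContinuousLinearMap.proj i : (Fin m → ℝ) →L[ℝ] ℝ) := fun x => (hgrad x).fderiv
  have hgradeq : ∀ x (i : Fin m), gradH x i = fderiv ℝ H x (Pi.single i 1) := by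
    intro x i
    rw [hfd]
    simp [ContinuousLinearMap.sum_apply, ContinuousLinearMap.smul_apply,
      ContinuousLinearMap.proj_apply, Pi.single_apply]
  have hgradcont : Continuous gradH := by
    apply continuous_pi
    intro i
    have : (fun x => gradH x i) = fun x => fderiv ℝ H x (Pi.single i 1) :=
      funext fun x => hgradeq x i
    rw [this]
    exact (hH1.continuous_fderiv one_ne_zero).clm_apply continuous_const
  -- skew-symmetry gives zero quadratic form
  have skew0 : ∀ x : Fin m → ℝ, x ⬝ᵥ S.mulVec x = 0 := by
    intro x
    have h1 : x ⬝ᵥ S.mulVec x = Sᵀ.mulVec x ⬝ᵥ x := by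
      rw [Matrix.dotProduct_mulVec, Matrix.mulVec_transpose]
    rw [hskew, Matrix.neg_mulVec, neg_dotProduct, dotProduct_comm] at h1
    rw [dotProduct_comm]
    linarith
  set β : ℕ → Fin m → ℝ := fun j => ∫ ζ in (0:ℝ)..1, (P j).eval ζ • gradH (σ (ζ * h))
    with hβ
  set v : ℕ → Fin m → ℝ := fun j => S.mulVec (β j) with hv
  set F : ℝ → Fin m → ℝ := fun c => σ 0 + h • ∑ j ∈ Finset.range s,
      (∫ x in (0:ℝ)..c, (P j).eval x) • v j with hFdef
  have hF : ∀ c ∈ Set.Icc (0:ℝ) 1, σ (c * h) = F c := by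
    intro c hc
    simp only [hFdef, hv, hβ]
    exact hσeq c hc
  -- derivative of F
  have hFderiv : ∀ c : ℝ, HasDerivAt F (h • ∑ j ∈ Finset.range s, (P j).eval c • v j) c := by
    intro c
    have h1 : HasDerivAt (fun c => ∑ j ∈ Finset.range s,
        (∫ x in (0:ℝ)..c, (P j).eval x) • v j)
        (∑ j ∈ Finset.range s, (P j).eval c • v j) c := by
      apply HasDerivAt.fun_sum
      intro j _
      have hd : HasDerivAt (fun u => ∫ x in (0:ℝ)..u, (P j).eval x) ((P j).eval c) c :=
        intervalIntegral.integral_hasDerivAt_right ((P j).continuous.intervalIntegrable _ _)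
          ((P j).continuous.stronglyMeasurableAtFilter _ _) (P j).continuous.continuousAt
      exact hd.smul_const (v j)
    rw [hFdef]
    exact (h1.const_smul h).const_add (σ 0)
  have hFcont : Continuous F := by
    rw [continuous_iff_continuousAt]
    exact fun c => (hFderiv c).continuousAt
  -- derivative of H ∘ F
  have key : ∀ c : ℝ, HasDerivAt (fun c => H (F c))
      (h * ∑ j ∈ Finset.range s, (P j).eval c * (gradH (F c) ⬝ᵥ v j)) c := by
    intro c
    have hc : HasDerivAt (fun c => H (F c)) _ c := (hgrad (F c)).comp_hasDerivAt c (hFderiv c)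
    convert hc using 1
    simp only [ContinuousLinearMap.sum_apply, ContinuousLinearMap.smul_apply,
      ContinuousLinearMap.proj_apply, smul_eq_mul, Pi.smul_apply, Finset.sum_apply,
      dotProduct, Finset.mul_sum, Finset.sum_mul]
    rw [Finset.sum_comm]
    exact Finset.sum_congr rfl fun i _ => Finset.sum_congr rfl fun j _ => by ring
  -- continuity of the integrand
  have hφcont : Continuous (fun c => h * ∑ j ∈ Finset.range s,
      (P j).eval c * (gradH (F c) ⬝ᵥ v j)) := by
    apply continuous_const.mul
    apply continuous_finset_sum
    intro j _
    apply ((P j).continuous).mul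
    simp only [dotProduct]
    apply continuous_finset_sum
    intro i _
    exact ((continuous_apply i).comp (hgradcont.comp hFcont)).mul continuous_const
  -- FTC
  have hFTC : H (F 1) - H (F 0) = ∫ c in (0:ℝ)..1,
      h * ∑ j ∈ Finset.range s, (P j).eval c * (gradH (F c) ⬝ᵥ v j) :=
    (intervalIntegral.integral_eq_sub_of_hasDerivAt (fun c _ => key c)
      (hφcont.intervalIntegrable 0 1)).symm
  -- each term in the sum integrates to βj ⬝ᵥ v j = 0
  have hterm : ∀ j ∈ Finset.range s,
      (∫ c in (0:ℝ)..1, (P j).eval c * (gradH (F c) ⬝ᵥ v j)) = 0 := by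
    intro j _
    set L : (Fin m → ℝ) →L[ℝ] ℝ :=
      ∑ i, v j i • (ContinuousLinearMap.proj i : (Fin m → ℝ) →L[ℝ] ℝ) with hL
    have hLapp : ∀ x : Fin m → ℝ, L x = x ⬝ᵥ v j := by
      intro x
      simp [hL, ContinuousLinearMap.sum_apply, ContinuousLinearMap.smul_apply,
        ContinuousLinearMap.proj_apply, dotProduct, mul_comm]
    have hicont : Continuous (fun c => (P j).eval c • gradH (F c)) :=
      ((P j).continuous).smul (hgradcont.comp hFcont)
    have e1 : (∫ c in (0:ℝ)..1, (P j).eval c * (gradH (F c) ⬝ᵥ v j))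
        = ∫ c in (0:ℝ)..1, L ((P j).eval c • gradH (F c)) := by
      apply intervalIntegral.integral_congr
      intro c _
      dsimp only
      rw [hLapp]
      rw [smul_dotProduct]
      simp
    have e2 : (∫ c in (0:ℝ)..1, L ((P j).eval c • gradH (F c)))
        = L (∫ c in (0:ℝ)..1, (P j).eval c • gradH (F c)) :=
      L.intervalIntegral_comp_comm (hicont.intervalIntegrable 0 1)
    have e3 : (∫ c in (0:ℝ)..1, (P j).eval c • gradH (F c)) = β j := by
      rw [hβ]
      apply intervalIntegral.integral_congr
      intro ζ hζ
      rw [Set.uIcc_of_le (by norm_num : (0:ℝ) ≤ 1)] at hζ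
      dsimp only
      rw [hF ζ hζ]
    rw [e1, e2, e3, hLapp, hv]
    exact skew0 (β j)
  have hint : (∫ c in (0:ℝ)..1,
      h * ∑ j ∈ Finset.range s, (P j).eval c * (gradH (F c) ⬝ᵥ v j)) = 0 := by
    rw [intervalIntegral.integral_const_mul]
    rw [intervalIntegral.integral_finset_sum]
    · rw [Finset.sum_congr rfl hterm]
      simp
    · intro j _
      apply Continuous.intervalIntegrable
      apply ((P j).continuous).mul
      simp only [dotProduct]
      apply continuous_finset_sum
      intro i _
      exact ((continuous_apply i).comp (hgradcont.comp hFcont)).mul continuous_const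
  have e1 : σ h = F 1 := by
    have := hF 1 (by norm_num)
    rwa [one_mul] at this
  have e0 : σ 0 = F 0 := by
    have := hF 0 (by norm_num)
    rwa [zero_mul] at this
  rw [e1, e0]
  rw [hint] at hFTC
  linarith
end

section
/- If S is negative semidefinite, i.e. xᵀSx ≤ 0 for all x ∈ ℝ^m, then H(σ(h)) ≤ H(σ(0)). -/
open Matrix MeasureTheory

/-- For the problem `ẏ = S ∇H(y)` with `S` negative semidefinite (`xᵀSx ≤ 0` for all `x`),
the polynomial approximation `σ` of degree `≤ s` satisfying
`σ(ch) = σ(0) + h ∑_{j<s} (∫₀^c P_j) S β_j(σ)`, `β_j(σ) = ∫₀¹ P_j(ζ) ∇H(σ(ζh)) dζ`,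
dissipates the Hamiltonian: `H(σ(h)) ≤ H(σ(0))`. -/
theorem stmt5
    (P : ℕ → Polynomial ℝ)
    (hPdeg : ∀ j, (P j).natDegree = j)
    (hPlead : ∀ j, 0 < (P j).leadingCoeff)
    (hPorth : ∀ i j : ℕ,
      (∫ x in (0:ℝ)..1, (P i).eval x * (P j).eval x) = if i = j then (1:ℝ) else 0)
    (m s : ℕ) (hm : 1 ≤ m) (hs : 1 ≤ s)
    (S : Matrix (Fin m) (Fin m) ℝ)
    (H : (Fin m → ℝ) → ℝ) (gradH : (Fin m → ℝ) → (Fin m → ℝ))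
    (hH1 : ContDiff ℝ 1 H)
    (hgrad : ∀ x : Fin m → ℝ,
      HasFDerivAt H (∑ i : Fin m, gradH x i •
        (ContinuousLinearMap.proj i : (Fin m → ℝ) →L[ℝ] ℝ)) x)
    (h : ℝ) (hh : 0 < h)
    (σ : ℝ → Fin m → ℝ)
    (hσpoly : ∀ i : Fin m,
      ∃ p : Polynomial ℝ, p.natDegree ≤ s ∧ ∀ t : ℝ, σ t i = p.eval t)
    (hσeq : ∀ c ∈ Set.Icc (0:ℝ) 1,
      σ (c * h) = σ 0 + h • ∑ j ∈ Finset.range s,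
        (∫ x in (0:ℝ)..c, (P j).eval x) •
          S.mulVec (∫ ζ in (0:ℝ)..1, (P j).eval ζ • gradH (σ (ζ * h))))
    (hneg : ∀ x : Fin m → ℝ, x ⬝ᵥ S.mulVec x ≤ 0) :
    H (σ h) ≤ H (σ 0) := by
  classical
  set β : ℕ → Fin m → ℝ := fun j => ∫ ζ in (0:ℝ)..1, (P j).eval ζ • gradH (σ (ζ * h)) with hβ
  set v : ℕ → Fin m → ℝ := fun j => S.mulVec (β j) with hv
  set φ : ℝ → Fin m → ℝ := fun c => σ 0 + h • ∑ j ∈ Finset.range s,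
      (∫ x in (0:ℝ)..c, (P j).eval x) • v j with hφ
  have hφσ : ∀ c ∈ Set.Icc (0:ℝ) 1, φ c = σ (c * h) := fun c hc => (hσeq c hc).symm
  have hφ0 : φ 0 = σ 0 := by
    have := hφσ 0 (by norm_num)
    simpa using this
  have hφ1 : φ 1 = σ h := by
    have := hφσ 1 (by norm_num)
    simpa using this
  -- continuity of gradH
  have hgradH_eq : ∀ x (i : Fin m), gradH x i = fderiv ℝ H x (Pi.single i 1) := by
    intro x i
    rw [(hgrad x).fderiv]
    simp [Pi.single_apply]
  have hgradHc : Continuous gradH := by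
    apply continuous_pi
    intro i
    simp only [hgradH_eq]
    exact (hH1.continuous_fderiv one_ne_zero).clm_apply continuous_const
  have hσc : Continuous σ := by
    apply continuous_pi
    intro i
    obtain ⟨p, _, hp⟩ := hσpoly i
    simp only [hp]
    exact p.continuous
  have hFderiv : ∀ (j : ℕ) (c : ℝ),
      HasDerivAt (fun u => ∫ x in (0:ℝ)..u, (P j).eval x) ((P j).eval c) c := by
    intro j c
    exact intervalIntegral.integral_hasDerivAt_right
      ((P j).continuous.intervalIntegrable _ _)
      ((P j).continuous.stronglyMeasurableAtFilter _ _)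
      (P j).continuous.continuousAt
  have hφd : ∀ c : ℝ, HasDerivAt φ
      (h • ∑ j ∈ Finset.range s, (P j).eval c • v j) c := by
    intro c
    have h1 : HasDerivAt (fun u => ∑ j ∈ Finset.range s,
        (∫ x in (0:ℝ)..u, (P j).eval x) • v j)
        (∑ j ∈ Finset.range s, (P j).eval c • v j) c :=
      HasDerivAt.fun_sum fun j _ => (hFderiv j c).smul_const (v j)
    exact ((h1.const_smul h).const_add (σ 0))
  have hφc : Continuous φ := by
    rw [continuous_iff_continuousAt]
    exact fun c => (hφd c).continuousAt
  -- derivative of H ∘ φ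
  have key : ∀ c : ℝ, HasDerivAt (fun u => H (φ u))
      (gradH (φ c) ⬝ᵥ (h • ∑ j ∈ Finset.range s, (P j).eval c • v j)) c := by
    intro c
    have := (hgrad (φ c)).comp_hasDerivAt c (hφd c)
    convert this using 1
    · rfl
    · rfl
    · rfl
    simp only [dotProduct, ContinuousLinearMap.sum_apply, ContinuousLinearMap.smul_apply,
      ContinuousLinearMap.proj_apply, Pi.smul_apply, Finset.sum_apply, smul_eq_mul,
      Finset.mul_sum]
  have hdotc : ∀ j : ℕ, Continuous fun c : ℝ => gradH (φ c) ⬝ᵥ v j := by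
    intro j
    simp only [dotProduct]
    exact continuous_finset_sum _ fun i _ =>
      ((continuous_apply i).comp (hgradHc.comp hφc)).mul continuous_const
  have step1 : ∀ c : ℝ, gradH (φ c) ⬝ᵥ (h • ∑ j ∈ Finset.range s, (P j).eval c • v j)
      = ∑ j ∈ Finset.range s, h * ((P j).eval c * (gradH (φ c) ⬝ᵥ v j)) := by
    intro c
    simp only [dotProduct, Pi.smul_apply, Finset.sum_apply, smul_eq_mul,
      Finset.mul_sum]
    rw [Finset.sum_comm]
    exact Finset.sum_congr rfl fun j _ => Finset.sum_congr rfl fun i _ => by ring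
  have hcontd : Continuous fun c =>
      gradH (φ c) ⬝ᵥ (h • ∑ j ∈ Finset.range s, (P j).eval c • v j) := by
    have he : (fun c => gradH (φ c) ⬝ᵥ (h • ∑ j ∈ Finset.range s, (P j).eval c • v j))
        = fun c => ∑ j ∈ Finset.range s, h * ((P j).eval c * (gradH (φ c) ⬝ᵥ v j)) :=
      funext step1
    rw [he]
    exact continuous_finset_sum _ fun j _ =>
      continuous_const.mul ((P j).continuous.mul (hdotc j))
  have hFTC : (∫ c in (0:ℝ)..1,
      gradH (φ c) ⬝ᵥ (h • ∑ j ∈ Finset.range s, (P j).eval c • v j))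
      = H (φ 1) - H (φ 0) :=
    intervalIntegral.integral_eq_sub_of_hasDerivAt (fun c _ => key c)
      (hcontd.intervalIntegrable _ _)
  have hβcomp : ∀ (j : ℕ) (i : Fin m),
      β j i = ∫ ζ in (0:ℝ)..1, (P j).eval ζ * gradH (σ (ζ * h)) i := by
    intro j i
    have hint : IntervalIntegrable (fun ζ => (P j).eval ζ • gradH (σ (ζ * h))) volume 0 1 := by
      apply Continuous.intervalIntegrable
      exact (P j).continuous.smul (hgradHc.comp (hσc.comp (continuous_id.mul continuous_const)))
    have := (ContinuousLinearMap.proj (R := ℝ) (φ := fun _ : Fin m => ℝ) i).intervalIntegral_comp_comm hint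
    simp only [ContinuousLinearMap.proj_apply] at this
    calc β j i = (∫ ζ in (0:ℝ)..1, (P j).eval ζ • gradH (σ (ζ * h))) i := rfl
      _ = ∫ ζ in (0:ℝ)..1, ((P j).eval ζ • gradH (σ (ζ * h))) i := this.symm
      _ = ∫ ζ in (0:ℝ)..1, (P j).eval ζ * gradH (σ (ζ * h)) i := by
            simp [Pi.smul_apply, smul_eq_mul]
  have hgradσc : Continuous fun c : ℝ => gradH (σ (c * h)) :=
    hgradHc.comp (hσc.comp (continuous_id.mul continuous_const))
  have step2 : ∀ j : ℕ, (∫ c in (0:ℝ)..1, (P j).eval c * (gradH (φ c) ⬝ᵥ v j))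
      = β j ⬝ᵥ v j := by
    intro j
    have hcg : ∀ c ∈ Set.uIcc (0:ℝ) 1,
        (P j).eval c * (gradH (φ c) ⬝ᵥ v j) = (P j).eval c * (gradH (σ (c * h)) ⬝ᵥ v j) := by
      intro c hc
      rw [hφσ c (by rwa [Set.uIcc_of_le (by norm_num)] at hc)]
    rw [intervalIntegral.integral_congr hcg]
    have : ∀ c : ℝ, (P j).eval c * (gradH (σ (c * h)) ⬝ᵥ v j)
        = ∑ i : Fin m, ((P j).eval c * gradH (σ (c * h)) i) * v j i := by
      intro c
      simp only [dotProduct, Finset.mul_sum]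
      exact Finset.sum_congr rfl fun i _ => by ring
    simp only [this]
    rw [intervalIntegral.integral_finset_sum]
    · simp only [dotProduct]
      congr 1; ext i
      rw [intervalIntegral.integral_mul_const, ← hβcomp]
    · intro i _
      apply Continuous.intervalIntegrable
      exact (((P j).continuous.mul ((continuous_apply i).comp hgradσc)).mul continuous_const)
  have hval : H (σ h) - H (σ 0) = ∑ j ∈ Finset.range s, h * (β j ⬝ᵥ v j) := by
    rw [← hφ1, ← hφ0, ← hFTC]
    simp only [step1]
    rw [intervalIntegral.integral_finset_sum]
    · congr 1; ext j
      rw [intervalIntegral.integral_const_mul, step2]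
    · intro j _
      exact (continuous_const.mul ((P j).continuous.mul (hdotc j))).intervalIntegrable _ _
  have hle : ∑ j ∈ Finset.range s, h * (β j ⬝ᵥ v j) ≤ 0 := by
    apply Finset.sum_nonpos
    intro j _
    have hb := hneg (β j)
    have : v j = S.mulVec (β j) := rfl
    nlinarith [hneg (β j), hh.le]
  linarith [hle, hval]
end

section
/- Let g : ℝ → ℝ^m be real-analytic on an open interval containing 0. Then for every integer j with 0 ≤ j ≤ q−1, the quadrature error Δ_j(h) := ∫₀¹ P_j(ζ) g(ζh) dζ − ∑_{i=1}^k b_i P_j(c_i) g(c_i h) satisfies Δ_j(h) = O(h^{q−j}) as h → 0⁺, i.e. there exist C > 0 and h₀ > 0 such that |Δ_j(h)| ≤ C h^{q−j} for all 0 < h ≤ h₀. -/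
/-- Quadrature error for the Fourier coefficients: if the interpolatory quadrature with
distinct nodes `c₁,…,c_k ∈ [0,1]` and weights `b₁,…,b_k` has order `q` (exact for
polynomials of degree `≤ q−1`), and `g : ℝ → ℝ^m` is real-analytic on an open interval
containing `0`, then for `0 ≤ j ≤ q−1` the error
`Δ_j(h) = ∫₀¹ P_j(ζ) g(ζh) dζ − ∑_i b_i P_j(c_i) g(c_i h)` is `O(h^(q−j))`:
there exist `C > 0` and `h₀ > 0` with `‖Δ_j(h)‖ ≤ C h^(q−j)` for all `0 < h ≤ h₀`. -/
theorem stmt6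
    (P : ℕ → Polynomial ℝ)
    (hPdeg : ∀ j, (P j).natDegree = j)
    (hPlead : ∀ j, 0 < (P j).leadingCoeff)
    (hPorth : ∀ i j : ℕ,
      (∫ x in (0:ℝ)..1, (P i).eval x * (P j).eval x) = if i = j then (1:ℝ) else 0)
    (q k : ℕ) (hq : 1 ≤ q) (hk : 1 ≤ k)
    (c b : Fin k → ℝ)
    (hc : ∀ i, c i ∈ Set.Icc (0:ℝ) 1)
    (hcinj : Function.Injective c)
    (hquad : ∀ p : Polynomial ℝ, p.natDegree ≤ q - 1 →
      ∑ i : Fin k, b i * p.eval (c i) = ∫ x in (0:ℝ)..1, p.eval x)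
    (m : ℕ) (hm : 1 ≤ m)
    (g : ℝ → Fin m → ℝ)
    (aa bb : ℝ) (haa : aa < 0) (hbb : 0 < bb)
    (hg : ∀ x ∈ Set.Ioo aa bb, AnalyticAt ℝ g x)
    (j : ℕ) (hj : j ≤ q - 1) :
    ∃ C > (0:ℝ), ∃ h₀ > (0:ℝ), ∀ h : ℝ, 0 < h → h ≤ h₀ →
      ‖(∫ ζ in (0:ℝ)..1, (P j).eval ζ • g (ζ * h)) -
        ∑ i : Fin k, (b i * (P j).eval (c i)) • g (c i * h)‖ ≤ C * h ^ (q - j) := by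
  classical
  set N := q - j with hN
  have hNpos : 1 ≤ N := by omega
  -- power series of g at 0
  obtain ⟨p, hp⟩ := hg 0 ⟨haa, hbb⟩
  obtain ⟨C₀, hC₀pos, hC₀⟩ := (hp.isBigO_sub_partialSum_pow N).exists_pos
  rw [Asymptotics.isBigOWith_iff] at hC₀
  obtain ⟨ε, hεpos, hε⟩ := Metric.eventually_nhds_iff.mp hC₀
  -- the Taylor coefficients as vectors
  set v : ℕ → (Fin m → ℝ) := fun n => p n (fun _ => (1:ℝ)) with hv
  have hps : ∀ y : ℝ, p.partialSum N y = ∑ n ∈ Finset.range N, y ^ n • v n := by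
    intro y
    unfold FormalMultilinearSeries.partialSum
    refine Finset.sum_congr rfl fun n _ => ?_
    have h1 : (fun _ : Fin n => y) = fun _ : Fin n => y • (1:ℝ) := by
      funext i; simp
    rw [h1, (p n).map_smul_univ]
    simp [hv]
  -- the Taylor remainder
  set f : ℝ → (Fin m → ℝ) := fun y => g y - ∑ n ∈ Finset.range N, y ^ n • v n with hf
  have hf_bound : ∀ y : ℝ, |y| < ε → ‖f y‖ ≤ C₀ * |y| ^ N := by
    intro y hy
    have := hε (y := y) (by simpa [Real.dist_eq] using hy)
    rw [hps] at this
    simpa [hf, abs_pow, abs_abs] using this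
  -- continuity of g ∘ (· * h) on [0,1]
  have hgc : ∀ h : ℝ, 0 < h → h < bb →
      ContinuousOn (fun ζ : ℝ => g (ζ * h)) (Set.uIcc (0:ℝ) 1) := by
    intro h h0 hhb ζ hζ
    rw [Set.uIcc_of_le zero_le_one] at hζ
    have hx : ζ * h ∈ Set.Ioo aa bb := by
      constructor
      · nlinarith [hζ.1, hζ.2]
      · nlinarith [hζ.1, hζ.2]
    have hmul : ContinuousAt (fun z : ℝ => z * h) ζ := (continuous_mul_right h).continuousAt
    have hcomp := ContinuousAt.comp (x := ζ) (f := fun z : ℝ => z * h) (g := g)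
      (hg _ hx).continuousAt hmul
    exact hcomp.continuousWithinAt
  -- quadrature exactness on P j * X ^ n for n < N
  have hquadn : ∀ n, n < N →
      ∑ i : Fin k, b i * ((P j).eval (c i) * (c i) ^ n)
        = ∫ ζ in (0:ℝ)..1, (P j).eval ζ * ζ ^ n := by
    intro n hn
    have hdeg : ((P j) * Polynomial.X ^ n).natDegree ≤ q - 1 := by
      refine le_trans (Polynomial.natDegree_mul_le) ?_
      rw [hPdeg, Polynomial.natDegree_X_pow]
      omega
    have := hquad ((P j) * Polynomial.X ^ n) hdeg
    simpa using this
  -- the quadrature is exact for ζ ↦ P j ζ • T (ζ h)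
  have hT : ∀ h : ℝ,
      (∫ ζ in (0:ℝ)..1, (P j).eval ζ • (∑ n ∈ Finset.range N, (ζ * h) ^ n • v n))
        = ∑ i : Fin k, (b i * (P j).eval (c i)) •
            (∑ n ∈ Finset.range N, (c i * h) ^ n • v n) := by
    intro h
    have hint : ∀ n ∈ Finset.range N, IntervalIntegrable
        (fun ζ : ℝ => ((P j).eval ζ * (ζ * h) ^ n) • v n) MeasureTheory.volume 0 1 := by
      intro n _
      apply Continuous.intervalIntegrable
      fun_prop
    calc (∫ ζ in (0:ℝ)..1, (P j).eval ζ • (∑ n ∈ Finset.range N, (ζ * h) ^ n • v n))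
        = ∫ ζ in (0:ℝ)..1, ∑ n ∈ Finset.range N, ((P j).eval ζ * (ζ * h) ^ n) • v n := by
          congr 1; funext ζ
          rw [Finset.smul_sum]
          exact Finset.sum_congr rfl fun n _ => smul_smul _ _ _
      _ = ∑ n ∈ Finset.range N, ∫ ζ in (0:ℝ)..1, ((P j).eval ζ * (ζ * h) ^ n) • v n :=
          intervalIntegral.integral_finset_sum hint
      _ = ∑ n ∈ Finset.range N, (∫ ζ in (0:ℝ)..1, (P j).eval ζ * (ζ * h) ^ n) • v n := by
          exact Finset.sum_congr rfl fun n _ => intervalIntegral.integral_smul_const _ _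
      _ = ∑ n ∈ Finset.range N, ((∫ ζ in (0:ℝ)..1, (P j).eval ζ * ζ ^ n) * h ^ n) • v n := by
          refine Finset.sum_congr rfl fun n _ => ?_
          congr 1
          rw [← intervalIntegral.integral_mul_const]
          congr 1; funext ζ; ring
      _ = ∑ n ∈ Finset.range N,
            ((∑ i : Fin k, b i * ((P j).eval (c i) * (c i) ^ n)) * h ^ n) • v n := by
          refine Finset.sum_congr rfl fun n hn => ?_
          rw [hquadn n (Finset.mem_range.mp hn)]
      _ = ∑ n ∈ Finset.range N, ∑ i : Fin k,
            ((b i * (P j).eval (c i)) * (c i * h) ^ n) • v n := by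
          refine Finset.sum_congr rfl fun n _ => ?_
          rw [← Finset.sum_smul, Finset.sum_mul]
          congr 1
          exact Finset.sum_congr rfl fun i _ => by ring
      _ = ∑ i : Fin k, ∑ n ∈ Finset.range N,
            ((b i * (P j).eval (c i)) * (c i * h) ^ n) • v n := Finset.sum_comm
      _ = ∑ i : Fin k, (b i * (P j).eval (c i)) •
            (∑ n ∈ Finset.range N, (c i * h) ^ n • v n) := by
          refine Finset.sum_congr rfl fun i _ => ?_
          rw [Finset.smul_sum]
          exact Finset.sum_congr rfl fun n _ => by rw [smul_smul]
  -- rewrite the error using f instead of g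
  have key : ∀ h : ℝ, 0 < h → h < bb →
      (∫ ζ in (0:ℝ)..1, (P j).eval ζ • g (ζ * h)) -
        ∑ i : Fin k, (b i * (P j).eval (c i)) • g (c i * h)
      = (∫ ζ in (0:ℝ)..1, (P j).eval ζ • f (ζ * h)) -
        ∑ i : Fin k, (b i * (P j).eval (c i)) • f (c i * h) := by
    intro h h0 hhb
    have hig : IntervalIntegrable (fun ζ : ℝ => (P j).eval ζ • g (ζ * h))
        MeasureTheory.volume 0 1 := by
      apply ContinuousOn.intervalIntegrable
      exact (Polynomial.continuous _).continuousOn.smul (hgc h h0 hhb)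
    have hiT : IntervalIntegrable
        (fun ζ : ℝ => (P j).eval ζ • (∑ n ∈ Finset.range N, (ζ * h) ^ n • v n))
        MeasureTheory.volume 0 1 := by
      apply Continuous.intervalIntegrable; fun_prop
    have hsplit : (∫ ζ in (0:ℝ)..1, (P j).eval ζ • f (ζ * h))
        = (∫ ζ in (0:ℝ)..1, (P j).eval ζ • g (ζ * h))
          - ∫ ζ in (0:ℝ)..1, (P j).eval ζ • (∑ n ∈ Finset.range N, (ζ * h) ^ n • v n) := by
      rw [← intervalIntegral.integral_sub hig hiT]
      congr 1; funext ζ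
      simp [hf, smul_sub]
    rw [hsplit, hT h]
    have h2 : ∑ i : Fin k, (b i * (P j).eval (c i)) • f (c i * h)
        = (∑ i : Fin k, (b i * (P j).eval (c i)) • g (c i * h))
          - ∑ i : Fin k, (b i * (P j).eval (c i)) •
              (∑ n ∈ Finset.range N, (c i * h) ^ n • v n) := by
      rw [← Finset.sum_sub_distrib]
      refine Finset.sum_congr rfl fun i _ => ?_
      rw [← smul_sub]
    rw [h2]
    abel
  -- bound for P j on [0,1]
  obtain ⟨Mp, hMp⟩ := (isCompact_Icc (a := (0:ℝ)) (b := 1)).exists_bound_of_continuousOn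
    (Polynomial.continuous (P j)).continuousOn
  have hMp0 : 0 ≤ Mp := le_trans (norm_nonneg _) (hMp 0 ⟨le_refl _, zero_le_one⟩)
  set S : ℝ := ∑ i : Fin k, |b i * (P j).eval (c i)| with hS
  have hS0 : 0 ≤ S := Finset.sum_nonneg fun i _ => abs_nonneg _
  refine ⟨(Mp + S) * C₀ + 1, by positivity, min (ε / 2) (bb / 2), by positivity, ?_⟩
  intro h h0 hh0
  have hhε : h < ε := lt_of_le_of_lt (le_trans hh0 (min_le_left _ _)) (by linarith)
  have hhb : h < bb := lt_of_le_of_lt (le_trans hh0 (min_le_right _ _)) (by linarith)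
  rw [key h h0 hhb]
  -- bound the remainder parts
  have hfy : ∀ y : ℝ, 0 ≤ y → y ≤ h → ‖f y‖ ≤ C₀ * h ^ N := by
    intro y hy0 hyh
    have h1 : |y| < ε := by rw [abs_of_nonneg hy0]; linarith
    refine le_trans (hf_bound y h1) ?_
    gcongr
    rw [abs_of_nonneg hy0]; exact hyh
  have hbound1 : ‖∫ ζ in (0:ℝ)..1, (P j).eval ζ • f (ζ * h)‖ ≤ Mp * (C₀ * h ^ N) := by
    have := intervalIntegral.norm_integral_le_of_norm_le_const
      (C := Mp * (C₀ * h ^ N)) (f := fun ζ : ℝ => (P j).eval ζ • f (ζ * h))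
      (a := 0) (b := 1) ?_
    · simpa using this
    · intro ζ hζ
      rw [Set.uIoc_of_le zero_le_one] at hζ
      have hζ0 : 0 ≤ ζ := le_of_lt hζ.1
      have hζ1 : ζ ≤ 1 := hζ.2
      rw [norm_smul]
      have h1 : ‖(P j).eval ζ‖ ≤ Mp := hMp ζ ⟨hζ0, hζ1⟩
      have h2 : ‖f (ζ * h)‖ ≤ C₀ * h ^ N := by
        refine hfy _ (by positivity) ?_
        nlinarith
      exact mul_le_mul h1 h2 (norm_nonneg _) hMp0
  have hbound2 : ‖∑ i : Fin k, (b i * (P j).eval (c i)) • f (c i * h)‖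
      ≤ S * (C₀ * h ^ N) := by
    refine le_trans (norm_sum_le _ _) ?_
    rw [hS, Finset.sum_mul]
    refine Finset.sum_le_sum fun i _ => ?_
    rw [norm_smul, Real.norm_eq_abs]
    have h2 : ‖f (c i * h)‖ ≤ C₀ * h ^ N := by
      refine hfy _ (mul_nonneg (hc i).1 h0.le) ?_
      nlinarith [(hc i).1, (hc i).2]
    exact mul_le_mul_of_nonneg_left h2 (abs_nonneg _)
  calc ‖(∫ ζ in (0:ℝ)..1, (P j).eval ζ • f (ζ * h)) -
        ∑ i : Fin k, (b i * (P j).eval (c i)) • f (c i * h)‖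
      ≤ ‖∫ ζ in (0:ℝ)..1, (P j).eval ζ • f (ζ * h)‖ +
        ‖∑ i : Fin k, (b i * (P j).eval (c i)) • f (c i * h)‖ := norm_sub_le _ _
    _ ≤ Mp * (C₀ * h ^ N) + S * (C₀ * h ^ N) := add_le_add hbound1 hbound2
    _ = (Mp + S) * C₀ * h ^ N := by ring
    _ ≤ ((Mp + S) * C₀ + 1) * h ^ N := by
        have : (0:ℝ) ≤ h ^ N := by positivity
        nlinarith
end

section
/- Assume H is a polynomial (in m variables) whose total degree d satisfies s·d ≤ q. Then: if Sᵀ = −S one has H(u(h)) = H(u(0)); and if xᵀSx ≤ 0 for all x ∈ ℝ^m one has H(u(h)) ≤ H(u(0)). -/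
open Matrix

noncomputable def antider (p : Polynomial ℝ) : Polynomial ℝ :=
  p.sum fun n a => Polynomial.C (a / ((n : ℝ) + 1)) * Polynomial.X ^ (n + 1)

lemma antider_derivative (p : Polynomial ℝ) :
    Polynomial.derivative (antider p) = p := by
  rw [antider, Polynomial.sum_def, map_sum]
  have : ∀ n ∈ p.support,
      Polynomial.derivative (Polynomial.C (p.coeff n / ((n : ℝ) + 1)) * Polynomial.X ^ (n + 1))
        = Polynomial.C (p.coeff n) * Polynomial.X ^ n := by
    intro n _
    rw [Polynomial.derivative_C_mul, Polynomial.derivative_X_pow, Nat.add_sub_cancel,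
      ← mul_assoc, ← Polynomial.C_mul]
    congr 1
    push_cast
    field_simp
  rw [Finset.sum_congr rfl this]
  conv_rhs => rw [← Polynomial.sum_C_mul_X_pow_eq p]
  rw [Polynomial.sum_def]

lemma antider_eval_zero (p : Polynomial ℝ) : (antider p).eval 0 = 0 := by
  rw [antider, Polynomial.sum_def, Polynomial.eval_finset_sum]
  simp

lemma antider_natDegree (p : Polynomial ℝ) : (antider p).natDegree ≤ p.natDegree + 1 := by
  rw [antider, Polynomial.sum_def]
  apply Polynomial.natDegree_sum_le_of_forall_le
  intro n hn
  calc (Polynomial.C (p.coeff n / ((n : ℝ) + 1)) * Polynomial.X ^ (n + 1)).natDegree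
      ≤ (Polynomial.C (p.coeff n / ((n : ℝ) + 1))).natDegree
          + (Polynomial.X ^ (n + 1) : Polynomial ℝ).natDegree := Polynomial.natDegree_mul_le
    _ ≤ 0 + (n + 1) := by
        gcongr
        · exact le_of_eq (Polynomial.natDegree_C _)
        · exact Polynomial.natDegree_pow_le.trans (by simp)
    _ ≤ p.natDegree + 1 := by
        have := Polynomial.le_natDegree_of_mem_supp n hn
        omega

lemma antider_integral (p : Polynomial ℝ) (t : ℝ) :
    (∫ x in (0:ℝ)..t, p.eval x) = (antider p).eval t := by
  have hd : ∀ x ∈ Set.uIcc (0:ℝ) t, HasDerivAt (fun y => (antider p).eval y) (p.eval x) x := by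
    intro x _
    have h1 := (antider p).hasDerivAt x
    rwa [antider_derivative] at h1
  have hftc := intervalIntegral.integral_eq_sub_of_hasDerivAt hd
    ((p.continuous).intervalIntegrable _ _)
  simpa [antider_eval_zero] using hftc

lemma my_eval_eval₂ {m : ℕ} (W : Fin m → Polynomial ℝ) (p : MvPolynomial (Fin m) ℝ) (t : ℝ) :
    (MvPolynomial.eval₂ Polynomial.C W p).eval t
      = MvPolynomial.eval (fun l => (W l).eval t) p := by
  have h1 : (MvPolynomial.eval₂ Polynomial.C W p).eval t
      = (Polynomial.evalRingHom t) (MvPolynomial.eval₂ Polynomial.C W p) := rfl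
  rw [h1, MvPolynomial.eval₂_comp_left]
  have h2 : (Polynomial.evalRingHom t).comp Polynomial.C = RingHom.id ℝ := by
    ext x; simp
  rw [h2]
  rfl

lemma my_natDegree_eval₂ {m s : ℕ} (W : Fin m → Polynomial ℝ)
    (hW : ∀ l, (W l).natDegree ≤ s) (p : MvPolynomial (Fin m) ℝ) :
    (MvPolynomial.eval₂ Polynomial.C W p).natDegree ≤ p.totalDegree * s := by
  rw [MvPolynomial.eval₂_eq]
  apply Polynomial.natDegree_sum_le_of_forall_le
  intro d hd
  calc (Polynomial.C (MvPolynomial.coeff d p) * ∏ i ∈ d.support, W i ^ d i).natDegree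
      ≤ (Polynomial.C (MvPolynomial.coeff d p)).natDegree
          + (∏ i ∈ d.support, W i ^ d i).natDegree := Polynomial.natDegree_mul_le
    _ ≤ 0 + ∑ i ∈ d.support, (W i ^ d i).natDegree := by
        gcongr
        · exact le_of_eq (Polynomial.natDegree_C _)
        · exact Polynomial.natDegree_prod_le _ _
    _ ≤ ∑ i ∈ d.support, d i * s := by
        rw [zero_add]
        apply Finset.sum_le_sum
        intro i _
        exact Polynomial.natDegree_pow_le.trans (by gcongr; exact hW i)
    _ = (∑ i ∈ d.support, d i) * s := by rw [Finset.sum_mul]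
    _ ≤ p.totalDegree * s := by
        gcongr
        exact MvPolynomial.le_totalDegree hd

lemma my_deriv_eval₂ {m : ℕ} (W : Fin m → Polynomial ℝ) (p : MvPolynomial (Fin m) ℝ) :
    Polynomial.derivative (MvPolynomial.eval₂ Polynomial.C W p) =
      ∑ l : Fin m, MvPolynomial.eval₂ Polynomial.C W (MvPolynomial.pderiv l p) *
        Polynomial.derivative (W l) := by
  induction p using MvPolynomial.induction_on with
  | C a => simp [MvPolynomial.eval₂_C, MvPolynomial.pderiv_C]
  | add p q hp hq =>
      simp only [MvPolynomial.eval₂_add, map_add, hp, hq, add_mul, Finset.sum_add_distrib]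
  | mul_X p n ih =>
      rw [MvPolynomial.eval₂_mul, MvPolynomial.eval₂_X, Polynomial.derivative_mul, ih]
      have hp : ∀ l : Fin m, MvPolynomial.eval₂ Polynomial.C W
            (MvPolynomial.pderiv l (p * MvPolynomial.X n)) =
          MvPolynomial.eval₂ Polynomial.C W (MvPolynomial.pderiv l p) * W n
            + if l = n then MvPolynomial.eval₂ Polynomial.C W p else 0 := by
        intro l
        rw [MvPolynomial.pderiv_mul, MvPolynomial.eval₂_add, MvPolynomial.eval₂_mul,
          MvPolynomial.eval₂_X]
        by_cases hl : l = n
        · subst hl; simp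
        · simp [MvPolynomial.pderiv_X, Pi.single_apply, Ne.symm hl, hl]
      simp only [hp, add_mul, Finset.sum_add_distrib, ite_mul, zero_mul]
      rw [Finset.sum_ite_eq' Finset.univ n
        (fun l => MvPolynomial.eval₂ Polynomial.C W p * Polynomial.derivative (W l))]
      simp only [Finset.mem_univ, if_true]
      congr 1
      rw [Finset.sum_mul]
      apply Finset.sum_congr rfl; intro l _; ring

lemma my_sum_comm3 {α β γ : Type*} (s1 : Finset α) (s2 : Finset β) (s3 : Finset γ)
    (f : α → β → γ → ℝ) :
    ∑ a ∈ s1, ∑ b ∈ s2, ∑ c ∈ s3, f a b c = ∑ c ∈ s3, ∑ b ∈ s2, ∑ a ∈ s1, f a b c := by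
  rw [Finset.sum_comm]
  rw [show (∑ b ∈ s2, ∑ a ∈ s1, ∑ c ∈ s3, f a b c)
      = ∑ b ∈ s2, ∑ c ∈ s3, ∑ a ∈ s1, f a b c from
    Finset.sum_congr rfl fun b _ => Finset.sum_comm]
  exact Finset.sum_comm

/-- Fully discretized conservative/dissipative case with polynomial Hamiltonian:
assume `H` is a polynomial in `m` variables whose total degree `d` satisfies `s·d ≤ q`,
where the quadrature `(c_i, b_i)` has order `q`, and `u` is the degree-`≤ s` polynomial
satisfying `u(ch) = u(0) + h ∑_{j<s} (∫₀^c P_j) S ∑_i b_i P_j(c_i) ∇H(u(c_i h))`.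
Then: if `Sᵀ = −S` one has `H(u(h)) = H(u(0))`; and if `xᵀSx ≤ 0` for all `x` one has
`H(u(h)) ≤ H(u(0))`. -/
theorem stmt10
    (P : ℕ → Polynomial ℝ)
    (hPdeg : ∀ j, (P j).natDegree = j)
    (hPlead : ∀ j, 0 < (P j).leadingCoeff)
    (hPorth : ∀ i j : ℕ,
      (∫ x in (0:ℝ)..1, (P i).eval x * (P j).eval x) = if i = j then (1:ℝ) else 0)
    (q k : ℕ) (hq : 1 ≤ q) (hk : 1 ≤ k)
    (c b : Fin k → ℝ)
    (hc : ∀ i, c i ∈ Set.Icc (0:ℝ) 1)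
    (hcinj : Function.Injective c)
    (hquad : ∀ p : Polynomial ℝ, p.natDegree ≤ q - 1 →
      ∑ i : Fin k, b i * p.eval (c i) = ∫ x in (0:ℝ)..1, p.eval x)
    (m s : ℕ) (hm : 1 ≤ m) (hs : 1 ≤ s)
    (S : Matrix (Fin m) (Fin m) ℝ)
    (HP : MvPolynomial (Fin m) ℝ)
    (hHdeg : s * HP.totalDegree ≤ q)
    (h : ℝ) (hh : 0 < h)
    (u : ℝ → Fin m → ℝ)
    (hupoly : ∀ i : Fin m,
      ∃ p : Polynomial ℝ, p.natDegree ≤ s ∧ ∀ t : ℝ, u t i = p.eval t)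
    (hueq : ∀ cc ∈ Set.Icc (0:ℝ) 1,
      u (cc * h) = u 0 + h • ∑ j ∈ Finset.range s,
        (∫ x in (0:ℝ)..cc, (P j).eval x) •
          S.mulVec (∑ i : Fin k, (b i * (P j).eval (c i)) •
            (fun l : Fin m =>
              MvPolynomial.eval (u (c i * h)) (MvPolynomial.pderiv l HP)))) :
    (Sᵀ = -S →
      MvPolynomial.eval (u h) HP = MvPolynomial.eval (u 0) HP) ∧
    ((∀ x : Fin m → ℝ, x ⬝ᵥ S.mulVec x ≤ 0) →
      MvPolynomial.eval (u h) HP ≤ MvPolynomial.eval (u 0) HP) := by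
  classical
  -- the vectors v j = ∑_i b_i P_j(c_i) ∇H(u(c_i h))
  set v : ℕ → Fin m → ℝ := fun j l => ∑ i : Fin k,
      (b i * (P j).eval (c i)) * MvPolynomial.eval (u (c i * h)) (MvPolynomial.pderiv l HP)
    with hv
  have hvv : ∀ j : ℕ, (∑ i : Fin k, (b i * (P j).eval (c i)) •
      (fun l : Fin m => MvPolynomial.eval (u (c i * h)) (MvPolynomial.pderiv l HP))) = v j := by
    intro j
    funext l
    rw [Finset.sum_apply]
    simp [hv]
  have hueq' : ∀ cc ∈ Set.Icc (0:ℝ) 1, ∀ l : Fin m,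
      u (cc * h) l = u 0 l + h * ∑ j ∈ Finset.range s,
        (∫ x in (0:ℝ)..cc, (P j).eval x) * S.mulVec (v j) l := by
    intro cc hcc l
    rw [hueq cc hcc]
    simp only [hvv, Pi.add_apply, Pi.smul_apply, Finset.sum_apply, smul_eq_mul]
  -- the component polynomials of the curve
  set W : Fin m → Polynomial ℝ := fun l =>
      Polynomial.C (u 0 l) + Polynomial.C h * ∑ j ∈ Finset.range s,
        antider (P j) * Polynomial.C (S.mulVec (v j) l) with hWdef
  have hWeval : ∀ (t : ℝ) (l : Fin m), (W l).eval t
      = u 0 l + h * ∑ j ∈ Finset.range s,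
        (∫ x in (0:ℝ)..t, (P j).eval x) * S.mulVec (v j) l := by
    intro t l
    simp [hWdef, Polynomial.eval_finset_sum, antider_integral]
  have hWu : ∀ cc ∈ Set.Icc (0:ℝ) 1, ∀ l : Fin m, (W l).eval cc = u (cc * h) l := by
    intro cc hcc l
    rw [hWeval, hueq' cc hcc l]
  have hWdeg : ∀ l : Fin m, (W l).natDegree ≤ s := by
    intro l
    refine Polynomial.natDegree_add_le_of_degree_le (by simp) ?_
    refine Polynomial.natDegree_mul_le.trans ?_
    simp only [Polynomial.natDegree_C, zero_add]
    apply Polynomial.natDegree_sum_le_of_forall_le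
    intro j hj
    refine Polynomial.natDegree_mul_le.trans ?_
    simp only [Polynomial.natDegree_C, add_zero]
    refine (antider_natDegree _).trans ?_
    rw [hPdeg j]
    exact Nat.succ_le_of_lt (Finset.mem_range.mp hj)
  -- the composite polynomial
  set Φ : Polynomial ℝ := MvPolynomial.eval₂ Polynomial.C W HP with hΦ
  have hΦeval : ∀ t : ℝ, Φ.eval t = MvPolynomial.eval (fun l => (W l).eval t) HP :=
    fun t => my_eval_eval₂ W HP t
  have hΦ1 : Φ.eval 1 = MvPolynomial.eval (u h) HP := by
    rw [hΦeval]
    have : (fun l => (W l).eval 1) = u h := by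
      funext l
      rw [hWu 1 (by norm_num) l, one_mul]
    rw [this]
  have hΦ0 : Φ.eval 0 = MvPolynomial.eval (u 0) HP := by
    rw [hΦeval]
    have : (fun l => (W l).eval 0) = u 0 := by
      funext l
      rw [hWeval]
      simp [intervalIntegral.integral_same]
    rw [this]
  have hdΦdeg : (Polynomial.derivative Φ).natDegree ≤ q - 1 := by
    refine (Polynomial.natDegree_derivative_le Φ).trans ?_
    have : Φ.natDegree ≤ q := by
      refine (my_natDegree_eval₂ W hWdeg HP).trans ?_
      rw [mul_comm]
      exact hHdeg
    omega
  have hftc : (∫ x in (0:ℝ)..1, (Polynomial.derivative Φ).eval x) = Φ.eval 1 - Φ.eval 0 := by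
    refine intervalIntegral.integral_eq_sub_of_hasDerivAt (fun x _ => Φ.hasDerivAt x) ?_
    exact (Polynomial.continuous _).intervalIntegrable _ _
  -- derivative of the components
  have hdW : ∀ l : Fin m, Polynomial.derivative (W l)
      = Polynomial.C h * ∑ j ∈ Finset.range s, (P j) * Polynomial.C (S.mulVec (v j) l) := by
    intro l
    rw [hWdef]
    simp only [map_add, Polynomial.derivative_C, Polynomial.derivative_C_mul, zero_add, map_sum,
      Polynomial.derivative_mul, antider_derivative, Polynomial.derivative_C, mul_zero, add_zero,
      zero_mul]
  -- evaluate the derivative of Φ at the quadrature nodes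
  have hevalder : ∀ i : Fin k, (Polynomial.derivative Φ).eval (c i)
      = ∑ l : Fin m, MvPolynomial.eval (u (c i * h)) (MvPolynomial.pderiv l HP)
          * (h * ∑ j ∈ Finset.range s, (P j).eval (c i) * S.mulVec (v j) l) := by
    intro i
    rw [hΦ, my_deriv_eval₂, Polynomial.eval_finset_sum]
    apply Finset.sum_congr rfl
    intro l _
    rw [Polynomial.eval_mul, my_eval_eval₂]
    have harg : (fun l' => (W l').eval (c i)) = u (c i * h) :=
      funext fun l' => hWu (c i) (hc i) l'
    rw [harg, hdW l]
    simp [Polynomial.eval_finset_sum]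
  -- the main algebraic identity
  have hsum : ∑ i : Fin k, b i * (Polynomial.derivative Φ).eval (c i)
      = h * ∑ j ∈ Finset.range s, v j ⬝ᵥ S.mulVec (v j) := by
    have hvl : ∀ (j : ℕ) (l : Fin m), v j l = ∑ i : Fin k,
        (b i * (P j).eval (c i)) * MvPolynomial.eval (u (c i * h)) (MvPolynomial.pderiv l HP) :=
      fun j l => rfl
    calc ∑ i : Fin k, b i * (Polynomial.derivative Φ).eval (c i)
        = ∑ i : Fin k, ∑ l : Fin m, ∑ j ∈ Finset.range s,
            h * ((b i * (P j).eval (c i))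
                * MvPolynomial.eval (u (c i * h)) (MvPolynomial.pderiv l HP))
              * S.mulVec (v j) l := by
          apply Finset.sum_congr rfl
          intro i _
          rw [hevalder i, Finset.mul_sum]
          apply Finset.sum_congr rfl
          intro l _
          simp only [Finset.mul_sum]
          apply Finset.sum_congr rfl
          intro j _
          ring
      _ = ∑ j ∈ Finset.range s, ∑ l : Fin m, ∑ i : Fin k,
            h * ((b i * (P j).eval (c i))
                * MvPolynomial.eval (u (c i * h)) (MvPolynomial.pderiv l HP))
              * S.mulVec (v j) l := my_sum_comm3 _ _ _ _
      _ = h * ∑ j ∈ Finset.range s, v j ⬝ᵥ S.mulVec (v j) := by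
          rw [Finset.mul_sum]
          apply Finset.sum_congr rfl
          intro j _
          rw [dotProduct, Finset.mul_sum]
          apply Finset.sum_congr rfl
          intro l _
          rw [hvl j l, Finset.sum_mul, Finset.mul_sum]
          apply Finset.sum_congr rfl
          intro i _
          ring
  have key : MvPolynomial.eval (u h) HP - MvPolynomial.eval (u 0) HP
      = h * ∑ j ∈ Finset.range s, v j ⬝ᵥ S.mulVec (v j) := by
    rw [← hΦ1, ← hΦ0, ← hftc, ← hquad (Polynomial.derivative Φ) hdΦdeg, hsum]
  constructor
  · intro hskew
    have hzero : ∀ x : Fin m → ℝ, x ⬝ᵥ S.mulVec x = 0 := by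
      intro x
      have h1 : x ⬝ᵥ S.mulVec x = Sᵀ.mulVec x ⬝ᵥ x := by
        rw [Matrix.dotProduct_mulVec, Matrix.mulVec_transpose]
      rw [hskew, Matrix.neg_mulVec, neg_dotProduct] at h1
      have h2 : S.mulVec x ⬝ᵥ x = x ⬝ᵥ S.mulVec x := dotProduct_comm _ _
      linarith
    have : MvPolynomial.eval (u h) HP - MvPolynomial.eval (u 0) HP = 0 := by
      rw [key]
      simp [hzero]
    linarith
  · intro hdis
    have hsle : ∑ j ∈ Finset.range s, v j ⬝ᵥ S.mulVec (v j) ≤ 0 :=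
      Finset.sum_nonpos fun j _ => hdis (v j)
    have : MvPolynomial.eval (u h) HP - MvPolynomial.eval (u 0) HP ≤ 0 := by
      rw [key]
      exact mul_nonpos_of_nonneg_of_nonpos hh.le hsle
    linarith
end

section
/- Fix ξ ∈ [t₀, t₀+τ], η ∈ ℝ^m and t ∈ [ξ, t₀+τ]. Then the map F : C([t₀−τ, t₀], ℝ^m) → ℝ^m (with the sup norm) defined by F(φ) = y(t; ξ, η, φ) is Fréchet differentiable at every continuous φ, and its derivative is the bounded linear map δφ ↦ ∫_{ξ−τ}^{t−τ} Φ_φ(t, ζ+τ) F₂(y(ζ+τ; ξ, η, φ), φ(ζ)) δφ(ζ) dζ, where Φ_φ(·, r) is the solution of Φ̇(t, r) = F₁(y(t; ξ, η, φ), φ(t−τ)) Φ(t, r), Φ(r, r) = I. -/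
open Set MeasureTheory intervalIntegral


section aux

variable {F : Type*} [NormedAddCommGroup F] [NormedSpace ℝ F]

lemma hasDerivWithinAt_singleton' (g : ℝ → F) (x : ℝ) (c : F) :
    HasDerivWithinAt g c {x} x := by
  have : HasFDerivWithinAt g ((1 : ℝ →L[ℝ] ℝ).smulRight c) {x} x := by
    exact HasFDerivWithinAt.singleton
  simpa using this.hasDerivWithinAt

lemma glue_ode (v : ℝ → F → F) {a k b : ℝ} (hak : a ≤ k) (hkb : k ≤ b)
    (X₁ X₂ : ℝ → F)
    (h₁ : ∀ u ∈ Icc a k, HasDerivWithinAt X₁ (v u (X₁ u)) (Icc a k) u)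
    (h₂ : ∀ u ∈ Icc k b, HasDerivWithinAt X₂ (v u (X₂ u)) (Icc k b) u)
    (hk : X₁ k = X₂ k) :
    ∃ X : ℝ → F, (∀ s ≤ k, X s = X₁ s) ∧
      ∀ u ∈ Icc a b, HasDerivWithinAt X (v u (X u)) (Icc a b) u := by
  classical
  refine ⟨fun u => if u ≤ k then X₁ u else X₂ u, fun s hs => if_pos hs, ?_⟩
  have hXl : ∀ s ∈ Icc a k, (if s ≤ k then X₁ s else X₂ s) = X₁ s := fun s hs => if_pos hs.2
  have hXr : ∀ s ∈ Icc k b, (if s ≤ k then X₁ s else X₂ s) = X₂ s := by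
    intro s hs
    by_cases h : s ≤ k
    · have : s = k := le_antisymm h hs.1
      simp [this, hk]
    · simp [h]
  intro u hu
  rcases lt_trichotomy u k with hlt | heq | hgt
  · have hu1 : u ∈ Icc a k := ⟨hu.1, hlt.le⟩
    have hset : Icc a k = Icc a b ∩ Iic k := by
      ext s
      simp only [mem_Icc, mem_inter_iff, mem_Iic]
      exact ⟨fun h => ⟨⟨h.1, h.2.trans hkb⟩, h.2⟩, fun h => ⟨h.1.1, h.2⟩⟩
    have hmem : Icc a k ∈ nhdsWithin u (Icc a b) := by
      rw [hset]
      exact Filter.inter_mem self_mem_nhdsWithin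
        (mem_nhdsWithin_of_mem_nhds (Iic_mem_nhds hlt))
    have := ((h₁ u hu1).congr hXl (hXl u hu1)).mono_of_mem_nhdsWithin hmem
    simpa [hXl u hu1] using this
  · subst heq
    have hl := (h₁ u ⟨hak, le_rfl⟩).congr hXl (hXl u ⟨hak, le_rfl⟩)
    have hr0 := (h₂ u ⟨le_rfl, hkb⟩).congr hXr (hXr u ⟨le_rfl, hkb⟩)
    have hr : HasDerivWithinAt (fun s => if s ≤ u then X₁ s else X₂ s)
        (v u (X₁ u)) (Icc u b) u := by
      rw [hk]; exact hr0
    have := hl.union hr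
    rw [Icc_union_Icc_eq_Icc hak hkb] at this
    simpa [hXl u ⟨hak, le_rfl⟩] using this
  · have hu2 : u ∈ Icc k b := ⟨hgt.le, hu.2⟩
    have hset : Icc k b = Icc a b ∩ Ici k := by
      ext s
      simp only [mem_Icc, mem_inter_iff, mem_Ici]
      exact ⟨fun h => ⟨⟨hak.trans h.1, h.2⟩, h.1⟩, fun h => ⟨h.2, h.1.2⟩⟩
    have hmem : Icc k b ∈ nhdsWithin u (Icc a b) := by
      rw [hset]
      exact Filter.inter_mem self_mem_nhdsWithin
        (mem_nhdsWithin_of_mem_nhds (Ici_mem_nhds hgt))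
    have := ((h₂ u hu2).congr hXr (hXr u hu2)).mono_of_mem_nhdsWithin hmem
    simpa [hXr u hu2] using this

lemma gron_helper {X g : ℝ → F} {a b a' b' K eps : ℝ}
    (ha : a' ≤ a) (hb : b ≤ b')
    (hX : ∀ u ∈ Icc a b, HasDerivWithinAt X (g u) (Icc a' b') u)
    (hbound : ∀ u ∈ Ico a b, ‖g u‖ ≤ K * ‖X u‖ + eps) :
    ∀ u ∈ Icc a b, ‖X u‖ ≤ gronwallBound ‖X a‖ K eps (u - a) := by
  have hsub : Icc a b ⊆ Icc a' b' := Icc_subset_Icc ha hb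
  have hcont : ContinuousOn X (Icc a b) :=
    fun u hu => ((hX u hu).continuousWithinAt).mono hsub
  refine norm_le_gronwallBound_of_norm_deriv_right_le hcont (fun u hu => ?_) le_rfl hbound
  exact (hX u (Ico_subset_Icc_self hu)).mono_of_mem_nhdsWithin
    (Icc_mem_nhdsGE_of_mem ⟨ha.trans hu.1, lt_of_lt_of_le hu.2 hb⟩)

lemma gb_smul (K eps x c : ℝ) :
    gronwallBound 0 K (c * eps) x = c * gronwallBound 0 K eps x := by
  by_cases hK : K = 0
  · subst hK; rw [gronwallBound_K0, gronwallBound_K0]; ring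
  · rw [gronwallBound_of_K_ne_0 hK, gronwallBound_of_K_ne_0 hK]; ring

lemma gb_mono {K eps : ℝ} (hK : 0 ≤ K) (heps : 0 ≤ eps) {x y : ℝ}
    (hxy : x ≤ y) : gronwallBound 0 K eps x ≤ gronwallBound 0 K eps y := by
  by_cases hKz : K = 0
  · subst hKz; rw [gronwallBound_K0]; simp only [zero_add]
    nlinarith
  · have hKpos : 0 < K := lt_of_le_of_ne hK (Ne.symm hKz)
    rw [gronwallBound_of_K_ne_0 hKz]
    simp only [zero_mul, zero_add]
    have : Real.exp (K * x) ≤ Real.exp (K * y) :=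
      Real.exp_le_exp.2 (by nlinarith)
    have h1 : 0 ≤ eps / K := div_nonneg heps hK
    nlinarith

lemma gb_nonneg {K eps : ℝ} (hK : 0 ≤ K) (heps : 0 ≤ eps) {x : ℝ} (hx : 0 ≤ x) :
    0 ≤ gronwallBound 0 K eps x := by
  by_cases hKz : K = 0
  · subst hKz; rw [gronwallBound_K0]; simp only [zero_add]; positivity
  · rw [gronwallBound_of_K_ne_0 hKz]
    simp only [zero_mul, zero_add]
    have : Real.exp (K * 0) ≤ Real.exp (K * x) := Real.exp_le_exp.2 (by nlinarith)
    rw [mul_zero, Real.exp_zero] at this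
    have := div_nonneg heps hK
    nlinarith
  


lemma linear_ode_exists [CompleteSpace F] {B : ℝ → F →L[ℝ] F} {a b K : ℝ} (hab : a ≤ b)
    (hK : 0 ≤ K)
    (hBc : ContinuousOn B (Icc a b)) (hBn : ∀ u ∈ Icc a b, ‖B u‖ ≤ K) (X₀ : F) :
    ∃ X : ℝ → F, X a = X₀ ∧ ∀ u ∈ Icc a b, HasDerivWithinAt X (B u (X u)) (Icc a b) u := by
  classical
  set P : ℝ := ‖X₀‖ * Real.exp (K * (b - a)) with hP
  have hP0 : 0 ≤ P := by positivity
  set h : ℝ := 1 / (K * (P + 1) + 1) with hh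
  have hhpos : 0 < h := by
    apply one_div_pos.2
    positivity
  -- a priori bound
  have apriori : ∀ k ∈ Icc a b, ∀ X : ℝ → F, X a = X₀ →
      (∀ u ∈ Icc a k, HasDerivWithinAt X (B u (X u)) (Icc a k) u) →
      ∀ u ∈ Icc a k, ‖X u‖ ≤ P := by
    intro k hk X hXa hX u hu
    have hcont : ContinuousOn X (Icc a k) := fun s hs => (hX s hs).continuousWithinAt
    have hbnd : ∀ s ∈ Ico a k, ‖B s (X s)‖ ≤ K * ‖X s‖ + 0 := by
      intro s hs
      have h1 : ‖B s (X s)‖ ≤ ‖B s‖ * ‖X s‖ := (B s).le_opNorm _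
      have h2 : ‖B s‖ ≤ K := hBn s ⟨hs.1, (hs.2.le.trans hk.2)⟩
      have := mul_le_mul_of_nonneg_right h2 (norm_nonneg (X s))
      linarith
    have hbd := norm_le_gronwallBound_of_norm_deriv_right_le (f' := fun u => B u (X u))
      hcont (fun s hs => (hX s (Ico_subset_Icc_self hs)).mono_of_mem_nhdsWithin
        (Icc_mem_nhdsGE_of_mem hs)) le_rfl hbnd u hu
    calc ‖X u‖ ≤ gronwallBound ‖X a‖ K 0 (u - a) := hbd
        _ = ‖X a‖ * Real.exp (K * (u - a)) := gronwallBound_ε0 _ _ _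
        _ ≤ ‖X₀‖ * Real.exp (K * (b - a)) := by
            rw [hXa]
            apply mul_le_mul_of_nonneg_left _ (norm_nonneg _)
            apply Real.exp_le_exp.2
            apply mul_le_mul_of_nonneg_left _ hK
            have := hu.2
            have := hk.2
            linarith
  -- local existence
  have localex : ∀ k, a ≤ k → k < b → ∀ x₀ : F, ‖x₀‖ ≤ P →
      ∃ Xl : ℝ → F, Xl k = x₀ ∧ ∀ u ∈ Icc k (min b (k + h)),
        HasDerivWithinAt Xl (B u (Xl u)) (Icc k (min b (k + h))) u := by
    intro k hak hkb x₀ hx₀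
    have hk' : k ≤ min b (k + h) := le_min hkb.le (by linarith)
    have hsub : Icc k (min b (k + h)) ⊆ Icc a b :=
      Icc_subset_Icc hak (min_le_left _ _)
    have hpl : IsPicardLindelof (fun u X => B u X) (tmin := k) (tmax := min b (k + h))
        ⟨k, ⟨le_rfl, hk'⟩⟩ x₀ (1 : NNReal) 0 ⟨K * (P + 1), by positivity⟩ ⟨K, hK⟩ := by
      constructor
      · intro u hu
        apply LipschitzWith.lipschitzOnWith
        refine LipschitzWith.weaken (B u).lipschitz ?_
        exact (NNReal.coe_le_coe (r₁ := ‖B u‖₊) (r₂ := ⟨K, hK⟩)).1 (hBn u (hsub hu))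
      · intro x hx
        exact (hBc.mono hsub).clm_apply continuousOn_const
      · intro u hu x hx
        have h1 : ‖B u x‖ ≤ ‖B u‖ * ‖x‖ := (B u).le_opNorm _
        have h2 : ‖B u‖ ≤ K := hBn u (hsub hu)
        have h3 : ‖x‖ ≤ ‖x₀‖ + 1 := by
          have hd := mem_closedBall_iff_norm.1 hx
          rw [NNReal.coe_one] at hd
          have : ‖x‖ ≤ ‖x₀‖ + ‖x - x₀‖ := by
            have := norm_add_le x₀ (x - x₀)
            simpa [add_sub_cancel] using this
          linarith
        have h4 : ‖x‖ ≤ P + 1 := by linarith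
        calc ‖B u x‖ ≤ ‖B u‖ * ‖x‖ := h1
          _ ≤ K * (P + 1) := by nlinarith [norm_nonneg (B u), norm_nonneg x]
      · have hmax : max (min b (k + h) - k) (k - k) = min b (k + h) - k := by
          rw [max_eq_left]; linarith
        simp only [NNReal.coe_mk, NNReal.coe_one, NNReal.coe_zero, sub_zero]
        rw [hmax]
        have h5 : min b (k + h) - k ≤ h := by
          have := min_le_right b (k + h); linarith
        calc K * (P + 1) * (min b (k + h) - k) ≤ K * (P + 1) * h := by
              apply mul_le_mul_of_nonneg_left h5; positivity
          _ ≤ 1 := by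
              rw [hh, mul_one_div, div_le_one (by positivity)]
              linarith
    exact hpl.exists_eq_forall_mem_Icc_hasDerivWithinAt₀
  -- induction
  have main : ∀ n : ℕ, ∃ X : ℝ → F, X a = X₀ ∧
      ∀ u ∈ Icc a (min b (a + n * h)), HasDerivWithinAt X (B u (X u))
        (Icc a (min b (a + n * h))) u := by
    intro n
    induction n with
    | zero =>
      refine ⟨fun _ => X₀, rfl, ?_⟩
      have : min b (a + (0:ℕ) * h) = a := by simp [min_eq_right hab]
      rw [this, Icc_self]
      intro u hu
      rw [mem_singleton_iff] at hu
      subst hu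
      exact hasDerivWithinAt_singleton' _ _ _
    | succ n ih =>
      obtain ⟨X, hXa, hX⟩ := ih
      by_cases hcase : b ≤ a + n * h
      · have e1 : min b (a + n * h) = b := min_eq_left hcase
        have e2 : min b (a + (n + 1 : ℕ) * h) = b := by
          apply min_eq_left
          have : (n : ℝ) * h ≤ ((n : ℕ) + 1 : ℕ) * h := by
            push_cast; nlinarith
          linarith
        rw [e2]; rw [e1] at hX
        exact ⟨X, hXa, hX⟩
      · push_neg at hcase
        set k : ℝ := a + n * h with hkdef
        have e1 : min b (a + n * h) = k := min_eq_right hcase.le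
        rw [e1] at hX
        have hak : a ≤ k := by
          rw [hkdef]; have : (0:ℝ) ≤ n * h := by positivity
          linarith
        have hXk : ‖X k‖ ≤ P :=
          apriori k ⟨hak, hcase.le⟩ X hXa hX k ⟨hak, le_rfl⟩
        obtain ⟨Xl, hXlk, hXl⟩ := localex k hak hcase (X k) hXk
        have e2 : min b (a + (n + 1 : ℕ) * h) = min b (k + h) := by
          rw [hkdef]; push_cast; ring_nf
        have hkk' : k ≤ min b (k + h) := le_min hcase.le (by linarith)
        obtain ⟨Xg, hXg1, hXg2⟩ := glue_ode (fun u X => B u X) hak hkk' X Xl hX hXl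
          hXlk.symm
        refine ⟨Xg, ?_, ?_⟩
        · rw [hXg1 a hak]; exact hXa
        · rw [e2]; exact hXg2
  obtain ⟨n, hn⟩ := exists_nat_ge ((b - a) / h)
  obtain ⟨X, hXa, hX⟩ := main n
  have : min b (a + n * h) = b := by
    apply min_eq_left
    rw [div_le_iff₀ hhpos] at hn
    linarith
  rw [this] at hX
  exact ⟨X, hXa, hX⟩

end aux


section calc1
variable {E G : Type*} [NormedAddCommGroup E] [NormedSpace ℝ E]
  [NormedAddCommGroup G] [NormedSpace ℝ G]

lemma lip_of_fderiv_bound {F : E → G} {C : ℝ} (hd : Differentiable ℝ F)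
    (hC : ∀ p, ‖fderiv ℝ F p‖ ≤ C) (p q : E) : ‖F p - F q‖ ≤ C * ‖p - q‖ :=
  Convex.norm_image_sub_le_of_norm_hasFDerivWithin_le
    (fun x _ => (hd x).hasFDerivAt.hasFDerivWithinAt) (fun x _ => hC x) convex_univ
    (mem_univ q) (mem_univ p)

lemma taylor_sq_bound {F : E → G} {C₂ : ℝ} (hd : Differentiable ℝ F)
    (hd' : Differentiable ℝ (fderiv ℝ F))
    (hC : ∀ p, ‖fderiv ℝ (fderiv ℝ F) p‖ ≤ C₂) (p q : E) :
    ‖F (p + q) - F p - fderiv ℝ F p q‖ ≤ C₂ * ‖q‖ * ‖q‖ := by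
  have lipD : ∀ x y : E, ‖fderiv ℝ F x - fderiv ℝ F y‖ ≤ C₂ * ‖x - y‖ :=
    fun x y => lip_of_fderiv_bound hd' hC x y
  have key : ∀ x ∈ Metric.closedBall (0 : E) ‖q‖,
      HasFDerivWithinAt (fun x => F (p + x) - (fderiv ℝ F p) x)
        (fderiv ℝ F (p + x) - fderiv ℝ F p) (Metric.closedBall (0 : E) ‖q‖) x := by
    intro x _
    have h1 : HasFDerivAt (fun x : E => F (p + x)) (fderiv ℝ F (p + x)) x := by
      have := (hd (p + x)).hasFDerivAt.comp x ((hasFDerivAt_id x).const_add p)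
      simpa [Function.comp_def] using this
    exact (h1.sub ((fderiv ℝ F p).hasFDerivAt)).hasFDerivWithinAt
  have hb : ∀ x ∈ Metric.closedBall (0 : E) ‖q‖,
      ‖fderiv ℝ F (p + x) - fderiv ℝ F p‖ ≤ C₂ * ‖q‖ := by
    intro x hx
    have h2 := lipD (p + x) p
    simp only [add_sub_cancel_left] at h2
    have hxq : ‖x‖ ≤ ‖q‖ := by simpa using Metric.mem_closedBall.1 hx
    have hC2 : 0 ≤ C₂ := le_trans (norm_nonneg (fderiv ℝ (fderiv ℝ F) 0)) (hC 0)
    nlinarith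
  have h3 := Convex.norm_image_sub_le_of_norm_hasFDerivWithin_le key hb
    (convex_closedBall _ _) (Metric.mem_closedBall_self (norm_nonneg q))
    (show q ∈ Metric.closedBall (0 : E) ‖q‖ from mem_closedBall_iff_norm.2 (by simp))
  have e : F (p + q) - (fderiv ℝ F p) q - (F (p + 0) - (fderiv ℝ F p) 0)
      = F (p + q) - F p - (fderiv ℝ F p) q := by
    simp only [add_zero, map_zero, sub_zero]
    abel
  rw [e] at h3
  simpa using h3

variable {E₁ E₂ : Type*} [NormedAddCommGroup E₁] [NormedSpace ℝ E₁]
  [NormedAddCommGroup E₂] [NormedSpace ℝ E₂]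

lemma hasFDerivAt_comp_inl {F : E₁ × E₂ → G} (hd : Differentiable ℝ F) (z : E₁) (w : E₂) :
    HasFDerivAt (fun z' => F (z', w))
      ((fderiv ℝ F (z, w)).comp (ContinuousLinearMap.inl ℝ E₁ E₂)) z :=
  (hd (z, w)).hasFDerivAt.comp z (hasFDerivAt_prodMk_left z w)

lemma hasFDerivAt_comp_inr {F : E₁ × E₂ → G} (hd : Differentiable ℝ F) (z : E₁) (w : E₂) :
    HasFDerivAt (fun w' => F (z, w'))
      ((fderiv ℝ F (z, w)).comp (ContinuousLinearMap.inr ℝ E₁ E₂)) w :=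
  (hd (z, w)).hasFDerivAt.comp w (hasFDerivAt_prodMk_right z w)

lemma fderiv_pair_decomp (D : E₁ × E₂ →L[ℝ] G) (a : E₁) (b : E₂) :
    D (a, b) = (D.comp (ContinuousLinearMap.inl ℝ E₁ E₂)) a
      + (D.comp (ContinuousLinearMap.inr ℝ E₁ E₂)) b := by
  rw [ContinuousLinearMap.comp_apply, ContinuousLinearMap.comp_apply,
    ContinuousLinearMap.inl_apply, ContinuousLinearMap.inr_apply, ← map_add]
  norm_num

lemma norm_comp_inl_le (D : E₁ × E₂ →L[ℝ] G) :
    ‖D.comp (ContinuousLinearMap.inl ℝ E₁ E₂)‖ ≤ ‖D‖ := by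
  refine ContinuousLinearMap.opNorm_le_bound _ (norm_nonneg D) fun x => ?_
  rw [ContinuousLinearMap.comp_apply, ContinuousLinearMap.inl_apply]
  calc ‖D (x, 0)‖ ≤ ‖D‖ * ‖((x, 0) : E₁ × E₂)‖ := D.le_opNorm _
    _ = ‖D‖ * ‖x‖ := by rw [Prod.norm_def]; simp

lemma norm_comp_inr_le (D : E₁ × E₂ →L[ℝ] G) :
    ‖D.comp (ContinuousLinearMap.inr ℝ E₁ E₂)‖ ≤ ‖D‖ := by
  refine ContinuousLinearMap.opNorm_le_bound _ (norm_nonneg D) fun x => ?_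
  rw [ContinuousLinearMap.comp_apply, ContinuousLinearMap.inr_apply]
  calc ‖D (0, x)‖ ≤ ‖D‖ * ‖((0, x) : E₁ × E₂)‖ := D.le_opNorm _
    _ = ‖D‖ * ‖x‖ := by rw [Prod.norm_def]; simp

end calc1

set_option maxHeartbeats 4000000 in
/-- Fréchet differentiability of the solution of the local delay problem with respect to
the history: fix `ξ ∈ [t₀, t₀+τ]`, `η ∈ ℝ^m` and `t ∈ [ξ, t₀+τ]`.  The map
`F : C([t₀−τ, t₀], ℝ^m) → ℝ^m` (sup norm), `F(φ) = y(t; ξ, η, φ)`, is Fréchet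
differentiable at every continuous `φ`, with derivative the bounded linear map
`δφ ↦ ∫_{ξ−τ}^{t−τ} Φ_φ(t, ζ+τ) F₂(y(ζ+τ; ξ, η, φ), φ(ζ)) δφ(ζ) dζ`, where
`Φ_φ(·, r)` solves `Φ̇(t, r) = F₁(y(t; ξ, η, φ), φ(t−τ)) Φ(t, r)`, `Φ(r, r) = I`.
Histories are elements of `C([t₀−τ, t₀], ℝ^m)`, extended by `0` outside `[t₀−τ, t₀]`
(the extension is irrelevant, since only values inside the interval are ever used). -/
theorem stmt15
    (m : ℕ) (hm : 1 ≤ m) (τ t₀ : ℝ) (hτ : 0 < τ)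
    (f : (Fin m → ℝ) → (Fin m → ℝ) → (Fin m → ℝ))
    (hf : ContDiff ℝ (⊤ : ℕ∞) (Function.uncurry f))
    (hfb : ∀ n : ℕ, ∃ C : ℝ, ∀ zw : (Fin m → ℝ) × (Fin m → ℝ),
      ‖iteratedFDeriv ℝ n (Function.uncurry f) zw‖ ≤ C)
    (ξ : ℝ) (hξ : ξ ∈ Set.Icc t₀ (t₀ + τ)) (η : Fin m → ℝ)
    (t : ℝ) (ht : t ∈ Set.Icc ξ (t₀ + τ))
    (Y : ContinuousMap (Set.Icc (t₀ - τ) t₀) (Fin m → ℝ) → ℝ → Fin m → ℝ)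
    (hY : ∀ ψ : ContinuousMap (Set.Icc (t₀ - τ) t₀) (Fin m → ℝ), Y ψ ξ = η ∧
      ∀ r ∈ Set.Icc t₀ (t₀ + τ),
        HasDerivWithinAt (Y ψ)
          (f (Y ψ r)
            (if hr : r - τ ∈ Set.Icc (t₀ - τ) t₀ then ψ ⟨r - τ, hr⟩ else 0))
          (Set.Icc t₀ (t₀ + τ)) r) :
    ∀ φ : ContinuousMap (Set.Icc (t₀ - τ) t₀) (Fin m → ℝ),
      ∃ Φ : ℝ → ℝ → ((Fin m → ℝ) →L[ℝ] (Fin m → ℝ)),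
        (∀ r ∈ Set.Icc t₀ (t₀ + τ),
          Φ r r = ContinuousLinearMap.id ℝ (Fin m → ℝ) ∧
          ∀ u ∈ Set.Icc t₀ (t₀ + τ),
            HasDerivWithinAt (fun v => Φ v r)
              ((fderiv ℝ
                (fun z => f z
                  (if hu : u - τ ∈ Set.Icc (t₀ - τ) t₀ then φ ⟨u - τ, hu⟩ else 0))
                (Y φ u)).comp (Φ u r))
              (Set.Icc t₀ (t₀ + τ)) u) ∧
        ∃ L : ContinuousMap (Set.Icc (t₀ - τ) t₀) (Fin m → ℝ) →L[ℝ] (Fin m → ℝ),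
          HasFDerivAt (fun ψ => Y ψ t) L φ ∧
          ∀ δφ : ContinuousMap (Set.Icc (t₀ - τ) t₀) (Fin m → ℝ),
            L δφ = ∫ ζ in (ξ - τ)..(t - τ),
              (Φ t (ζ + τ))
                ((fderiv ℝ (fun w => f (Y φ (ζ + τ)) w)
                  (if hζ : ζ ∈ Set.Icc (t₀ - τ) t₀ then φ ⟨ζ, hζ⟩ else 0))
                  (if hζ : ζ ∈ Set.Icc (t₀ - τ) t₀ then δφ ⟨ζ, hζ⟩ else 0)) := by
  intro φ
  classical
  have hle : t₀ - τ ≤ t₀ := by linarith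
  have htt : t₀ ≤ t₀ + τ := by linarith
  set F : (Fin m → ℝ) × (Fin m → ℝ) → (Fin m → ℝ) := Function.uncurry f with hFdef
  have hdF : Differentiable ℝ F := hf.differentiable (by simp)
  have hf' : ContDiff ℝ (⊤ : ℕ∞) (fderiv ℝ F) := hf.fderiv_right (by exact_mod_cast le_top)
  have hdF' : Differentiable ℝ (fderiv ℝ F) := hf'.differentiable (by simp)
  have hcF' : Continuous (fderiv ℝ F) := hf'.continuous
  obtain ⟨C₁', hC₁'⟩ := hfb 1
  obtain ⟨C₂', hC₂'⟩ := hfb 2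
  set C₁ : ℝ := max C₁' 0 with hC₁def
  set C₂ : ℝ := max C₂' 0 with hC₂def
  have hC₁0 : 0 ≤ C₁ := le_max_right _ _
  have hC₂0 : 0 ≤ C₂ := le_max_right _ _
  have hD1 : ∀ p, ‖fderiv ℝ F p‖ ≤ C₁ := by
    intro p
    have h1 : ‖fderiv ℝ F p‖ = ‖iteratedFDeriv ℝ 1 F p‖ := by
      rw [← norm_iteratedFDeriv_fderiv, norm_iteratedFDeriv_zero]
    rw [h1]
    exact le_trans (hC₁' p) (le_max_left _ _)
  have hD2 : ∀ p, ‖fderiv ℝ (fderiv ℝ F) p‖ ≤ C₂ := by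
    intro p
    have h1 : ‖fderiv ℝ (fderiv ℝ F) p‖ = ‖iteratedFDeriv ℝ 2 F p‖ := by
      rw [← norm_iteratedFDeriv_fderiv (n := 1), ← norm_iteratedFDeriv_fderiv (n := 0),
        norm_iteratedFDeriv_zero]
    rw [h1]
    exact le_trans (hC₂' p) (le_max_left _ _)
  have hlipF : ∀ p q, ‖F p - F q‖ ≤ C₁ * ‖p - q‖ := lip_of_fderiv_bound hdF hD1
  -- the window map
  set w : ContinuousMap (Set.Icc (t₀ - τ) t₀) (Fin m → ℝ) → ℝ → (Fin m → ℝ) :=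
    fun ψ u => if hr : u - τ ∈ Set.Icc (t₀ - τ) t₀ then ψ ⟨u - τ, hr⟩ else 0 with hwdef
  have hwin : ∀ u ∈ Icc t₀ (t₀ + τ), u - τ ∈ Icc (t₀ - τ) t₀ := fun u hu =>
    ⟨by linarith [hu.1], by linarith [hu.2]⟩
  have hyd : ∀ ψ, ∀ r ∈ Icc t₀ (t₀ + τ),
      HasDerivWithinAt (Y ψ) (f (Y ψ r) (w ψ r)) (Icc t₀ (t₀ + τ)) r := by
    intro ψ r hr
    have h := (hY ψ).2 r hr
    simp only [hwdef]
    exact h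
  have hy0 : ∀ ψ, Y ψ ξ = η := fun ψ => (hY ψ).1
  have hycont : ∀ ψ, ContinuousOn (Y ψ) (Icc t₀ (t₀ + τ)) :=
    fun ψ r hr => ((hY ψ).2 r hr).continuousWithinAt
  set pr : ℝ → (Set.Icc (t₀ - τ) t₀) := Set.projIcc (t₀ - τ) t₀ hle with hprdef
  have hweq : ∀ ψ : ContinuousMap (Set.Icc (t₀ - τ) t₀) (Fin m → ℝ),
      ∀ u ∈ Icc t₀ (t₀ + τ), w ψ u = ψ (pr (u - τ)) := by
    intro ψ u hu
    have h1 := hwin u hu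
    simp only [hwdef, hprdef]
    rw [dif_pos h1, Set.projIcc_of_mem hle h1]
  have hwcont : ∀ ψ : ContinuousMap (Set.Icc (t₀ - τ) t₀) (Fin m → ℝ),
      ContinuousOn (w ψ) (Icc t₀ (t₀ + τ)) := by
    intro ψ
    have h1 : Continuous fun u : ℝ => ψ (pr (u - τ)) := by
      apply ψ.continuous.comp
      simp only [hprdef]
      exact continuous_projIcc.comp (continuous_id.sub continuous_const)
    exact h1.continuousOn.congr (fun u hu => hweq ψ u hu)
  have hwsub : ∀ ψ χ : ContinuousMap (Set.Icc (t₀ - τ) t₀) (Fin m → ℝ),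
      ∀ u, w ψ u - w χ u = w (ψ - χ) u := by
    intro ψ χ u
    simp only [hwdef]
    by_cases h : u - τ ∈ Set.Icc (t₀ - τ) t₀
    · rw [dif_pos h, dif_pos h, dif_pos h, ContinuousMap.sub_apply]
    · rw [dif_neg h, dif_neg h, dif_neg h, sub_zero]
  have hwnorm : ∀ ψ : ContinuousMap (Set.Icc (t₀ - τ) t₀) (Fin m → ℝ),
      ∀ u, ‖w ψ u‖ ≤ ‖ψ‖ := by
    intro ψ u
    simp only [hwdef]
    by_cases h : u - τ ∈ Set.Icc (t₀ - τ) t₀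
    · rw [dif_pos h]; exact ψ.norm_coe_le_norm _
    · rw [dif_neg h]; simp [norm_nonneg]
  -- the coefficient A
  set A : ℝ → (Fin m → ℝ) →L[ℝ] (Fin m → ℝ) :=
    fun u => (fderiv ℝ F (Y φ u, w φ u)).comp
      (ContinuousLinearMap.inl ℝ (Fin m → ℝ) (Fin m → ℝ)) with hAdef
  have hfunl : ∀ z₂ : Fin m → ℝ, (fun z' => F (z', z₂)) = fun z' => f z' z₂ := by
    intro z₂; rw [hFdef]; funext z'; rfl
  have hfunr : ∀ z₁ : Fin m → ℝ, (fun z₂ => F (z₁, z₂)) = fun z₂ => f z₁ z₂ := by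
    intro z₁; rw [hFdef]; funext z₂; rfl
  have hAeq : ∀ u, A u = fderiv ℝ (fun z => f z (w φ u)) (Y φ u) := by
    intro u
    have h1 := (hasFDerivAt_comp_inl hdF (Y φ u) (w φ u)).fderiv
    rw [hfunl (w φ u)] at h1
    simp only [hAdef]
    exact h1.symm
  have hAnorm : ∀ u, ‖A u‖ ≤ C₁ := by
    intro u
    simp only [hAdef]
    exact le_trans (norm_comp_inl_le _) (hD1 _)
  have hAcont : ContinuousOn A (Icc t₀ (t₀ + τ)) := by
    have h1 : ContinuousOn (fun u => fderiv ℝ F (Y φ u, w φ u)) (Icc t₀ (t₀ + τ)) :=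
      hcF'.comp_continuousOn ((hycont φ).prodMk (hwcont φ))
    simp only [hAdef]
    exact h1.clm_comp continuousOn_const
  -- R and S
  have hBRn : ∀ u ∈ Icc t₀ (t₀ + τ),
      ‖(ContinuousLinearMap.compL ℝ (Fin m → ℝ) (Fin m → ℝ) (Fin m → ℝ)) (A u)‖ ≤ C₁ := by
    intro u hu
    refine ContinuousLinearMap.opNorm_le_bound _ hC₁0 fun X => ?_
    rw [ContinuousLinearMap.compL_apply]
    calc ‖(A u).comp X‖ ≤ ‖A u‖ * ‖X‖ := ContinuousLinearMap.opNorm_comp_le _ _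
      _ ≤ C₁ * ‖X‖ := mul_le_mul_of_nonneg_right (hAnorm u) (norm_nonneg _)
  have hBRc : ContinuousOn (fun u =>
      (ContinuousLinearMap.compL ℝ (Fin m → ℝ) (Fin m → ℝ) (Fin m → ℝ)) (A u))
      (Icc t₀ (t₀ + τ)) :=
    (ContinuousLinearMap.compL ℝ (Fin m → ℝ) (Fin m → ℝ) (Fin m → ℝ)).continuous.comp_continuousOn hAcont
  obtain ⟨R, hR0, hRd⟩ := linear_ode_exists htt hC₁0 hBRc hBRn
    (ContinuousLinearMap.id ℝ (Fin m → ℝ))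
  have hRd' : ∀ u ∈ Icc t₀ (t₀ + τ),
      HasDerivWithinAt R ((A u).comp (R u)) (Icc t₀ (t₀ + τ)) u := by
    intro u hu
    have h := hRd u hu
    rwa [ContinuousLinearMap.compL_apply] at h
  have hBSn : ∀ u ∈ Icc t₀ (t₀ + τ),
      ‖-((ContinuousLinearMap.compL ℝ (Fin m → ℝ) (Fin m → ℝ) (Fin m → ℝ)).flip (A u))‖ ≤ C₁ := by
    intro u hu
    rw [norm_neg]
    refine ContinuousLinearMap.opNorm_le_bound _ hC₁0 fun X => ?_
    rw [ContinuousLinearMap.flip_apply, ContinuousLinearMap.compL_apply]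
    calc ‖X.comp (A u)‖ ≤ ‖X‖ * ‖A u‖ := ContinuousLinearMap.opNorm_comp_le _ _
      _ ≤ ‖X‖ * C₁ := mul_le_mul_of_nonneg_left (hAnorm u) (norm_nonneg _)
      _ = C₁ * ‖X‖ := mul_comm _ _
  have hBSc : ContinuousOn (fun u =>
      -((ContinuousLinearMap.compL ℝ (Fin m → ℝ) (Fin m → ℝ) (Fin m → ℝ)).flip (A u)))
      (Icc t₀ (t₀ + τ)) :=
    ((ContinuousLinearMap.compL ℝ (Fin m → ℝ) (Fin m → ℝ) (Fin m → ℝ)).flip.continuous.comp_continuousOn hAcont).neg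
  obtain ⟨S, hS0, hSd⟩ := linear_ode_exists htt hC₁0 hBSc hBSn
    (ContinuousLinearMap.id ℝ (Fin m → ℝ))
  have hSd' : ∀ u ∈ Icc t₀ (t₀ + τ),
      HasDerivWithinAt S (-((S u).comp (A u))) (Icc t₀ (t₀ + τ)) u := by
    intro u hu
    have h := hSd u hu
    rwa [ContinuousLinearMap.neg_apply, ContinuousLinearMap.flip_apply,
      ContinuousLinearMap.compL_apply] at h
  have hRcont : ContinuousOn R (Icc t₀ (t₀ + τ)) := fun u hu => (hRd' u hu).continuousWithinAt
  have hScont : ContinuousOn S (Icc t₀ (t₀ + τ)) := fun u hu => (hSd' u hu).continuousWithinAt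
  -- S ∘ R = id
  have hSR : ∀ u ∈ Icc t₀ (t₀ + τ),
      (S u).comp (R u) = ContinuousLinearMap.id ℝ (Fin m → ℝ) := by
    have hPd : ∀ u ∈ Ico t₀ (t₀ + τ),
        HasDerivWithinAt (fun v => (S v).comp (R v)) 0 (Ici u) u := by
      intro u hu
      have h1 := (hSd' u (Ico_subset_Icc_self hu)).clm_comp (hRd' u (Ico_subset_Icc_self hu))
      have h2 : (-((S u).comp (A u))).comp (R u) + (S u).comp ((A u).comp (R u)) = 0 := by
        rw [ContinuousLinearMap.neg_comp, ContinuousLinearMap.comp_assoc]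
        exact neg_add_cancel _
      rw [h2] at h1
      exact h1.mono_of_mem_nhdsWithin (Icc_mem_nhdsGE_of_mem hu)
    have hPc : ContinuousOn (fun v => (S v).comp (R v)) (Icc t₀ (t₀ + τ)) :=
      hScont.clm_comp hRcont
    intro u hu
    have h3 := constant_of_has_deriv_right_zero hPc hPd u hu
    rw [h3, hS0, hR0, ContinuousLinearMap.id_comp]
  -- R ∘ S = id
  have hRS : ∀ u ∈ Icc t₀ (t₀ + τ),
      (R u).comp (S u) = ContinuousLinearMap.id ℝ (Fin m → ℝ) := by
    intro u hu
    have h1 : ((S u : (Fin m → ℝ) →ₗ[ℝ] (Fin m → ℝ))) * ((R u : (Fin m → ℝ) →ₗ[ℝ] (Fin m → ℝ))) = 1 := by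
      rw [Module.End.mul_eq_comp, Module.End.one_eq_id, ← ContinuousLinearMap.toLinearMap_comp,
        hSR u hu, ContinuousLinearMap.coe_id]
    have h2 := mul_eq_one_comm.1 h1
    apply ContinuousLinearMap.coe_injective
    rw [ContinuousLinearMap.toLinearMap_comp, ContinuousLinearMap.coe_id, ← Module.End.mul_eq_comp,
      ← Module.End.one_eq_id]
    exact h2
  -- interval facts
  have hxiI : ξ ∈ Icc t₀ (t₀ + τ) := hξ
  have htI : t ∈ Icc t₀ (t₀ + τ) := ⟨le_trans hξ.1 ht.1, ht.2⟩
  have hxit : ξ ≤ t := ht.1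
  have hsub : Icc ξ t ⊆ Icc t₀ (t₀ + τ) := Icc_subset_Icc hξ.1 ht.2
  have hzmem : ∀ ζ ∈ Icc (ξ - τ) (t - τ), ζ ∈ Icc (t₀ - τ) t₀ := fun ζ hζ =>
    ⟨by linarith [hζ.1, hξ.1], by linarith [hζ.2, ht.2]⟩
  have hzmem2 : ∀ ζ ∈ Icc (ξ - τ) (t - τ), ζ + τ ∈ Icc t₀ (t₀ + τ) := fun ζ hζ =>
    ⟨by linarith [hζ.1, hξ.1], by linarith [hζ.2, ht.2]⟩
  -- clamp
  have hxt' : ξ - τ ≤ t - τ := by linarith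
  obtain ⟨c, hcmem, hceq, hccont⟩ : ∃ c : ℝ → ℝ, (∀ s, c s ∈ Icc (ξ - τ) (t - τ)) ∧
      (∀ s ∈ Icc (ξ - τ) (t - τ), c s = s) ∧ Continuous c := by
    refine ⟨fun s => max (ξ - τ) (min s (t - τ)), fun s => ?_, fun s hs => ?_, ?_⟩
    · exact ⟨le_max_left _ _, max_le hxt' (min_le_right _ _)⟩
    · simp only [min_eq_left hs.2, max_eq_right hs.1]
    · exact continuous_const.max (continuous_id.min continuous_const)
  -- norm bounds for R and S
  set MR : ℝ := Real.exp (C₁ * τ) with hMRdef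
  have hMR0 : 0 < MR := Real.exp_pos _
  have hRb : ∀ u ∈ Icc t₀ (t₀ + τ), ‖R u‖ ≤ MR := by
    have hbnd : ∀ u ∈ Ico t₀ (t₀ + τ), ‖(A u).comp (R u)‖ ≤ C₁ * ‖R u‖ + 0 := by
      intro u hu
      rw [add_zero]
      calc ‖(A u).comp (R u)‖ ≤ ‖A u‖ * ‖R u‖ := ContinuousLinearMap.opNorm_comp_le _ _
        _ ≤ C₁ * ‖R u‖ := mul_le_mul_of_nonneg_right (hAnorm u) (norm_nonneg _)
    have h1 := gron_helper le_rfl le_rfl hRd' hbnd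
    intro u hu
    calc ‖R u‖ ≤ gronwallBound ‖R t₀‖ C₁ 0 (u - t₀) := h1 u hu
      _ = ‖R t₀‖ * Real.exp (C₁ * (u - t₀)) := gronwallBound_ε0 _ _ _
      _ ≤ 1 * Real.exp (C₁ * τ) := by
          apply mul_le_mul
          · rw [hR0]; exact ContinuousLinearMap.norm_id_le
          · apply Real.exp_le_exp.2
            have h2 := hu.1; have h3 := hu.2
            nlinarith
          · positivity
          · norm_num
      _ = MR := by rw [one_mul, hMRdef]
  have hSb : ∀ u ∈ Icc t₀ (t₀ + τ), ‖S u‖ ≤ MR := by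
    have hbnd : ∀ u ∈ Ico t₀ (t₀ + τ), ‖-((S u).comp (A u))‖ ≤ C₁ * ‖S u‖ + 0 := by
      intro u hu
      rw [add_zero, norm_neg]
      calc ‖(S u).comp (A u)‖ ≤ ‖S u‖ * ‖A u‖ := ContinuousLinearMap.opNorm_comp_le _ _
        _ ≤ ‖S u‖ * C₁ := mul_le_mul_of_nonneg_left (hAnorm u) (norm_nonneg _)
        _ = C₁ * ‖S u‖ := mul_comm _ _
    have h1 := gron_helper le_rfl le_rfl hSd' hbnd
    intro u hu
    calc ‖S u‖ ≤ gronwallBound ‖S t₀‖ C₁ 0 (u - t₀) := h1 u hu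
      _ = ‖S t₀‖ * Real.exp (C₁ * (u - t₀)) := gronwallBound_ε0 _ _ _
      _ ≤ 1 * Real.exp (C₁ * τ) := by
          apply mul_le_mul
          · rw [hS0]; exact ContinuousLinearMap.norm_id_le
          · apply Real.exp_le_exp.2
            have h2 := hu.1; have h3 := hu.2
            nlinarith
          · positivity
          · norm_num
      _ = MR := by rw [one_mul, hMRdef]
  -- the integrand
  set g : ContinuousMap (Set.Icc (t₀ - τ) t₀) (Fin m → ℝ) → ℝ → (Fin m → ℝ) :=
    fun δ s => (S (c s + τ)) (((fderiv ℝ F (Y φ (c s + τ), φ (pr (c s)))).comp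
      (ContinuousLinearMap.inr ℝ (Fin m → ℝ) (Fin m → ℝ))) (δ (pr (c s)))) with hgdef
  have hplus : ∀ s, c s + τ ∈ Icc t₀ (t₀ + τ) := fun s => hzmem2 _ (hcmem s)
  have hprc : Continuous fun s => pr (c s) := by
    simp only [hprdef]
    exact continuous_projIcc.comp hccont
  have hgcont : ∀ δ : ContinuousMap (Set.Icc (t₀ - τ) t₀) (Fin m → ℝ),
      Continuous (g δ) := by
    intro δ
    have hc1 : Continuous fun s => c s + τ := hccont.add continuous_const
    have hc2 : Continuous fun s => S (c s + τ) := hScont.comp_continuous hc1 hplus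
    have hc3 : Continuous fun s => Y φ (c s + τ) := (hycont φ).comp_continuous hc1 hplus
    have hc4 : Continuous fun s => φ (pr (c s)) := φ.continuous.comp hprc
    have hc5 : Continuous fun s => δ (pr (c s)) := δ.continuous.comp hprc
    have hc6 : Continuous fun s => (fderiv ℝ F (Y φ (c s + τ), φ (pr (c s)))).comp
        (ContinuousLinearMap.inr ℝ (Fin m → ℝ) (Fin m → ℝ)) :=
      (hcF'.comp (hc3.prodMk hc4)).clm_comp continuous_const
    simp only [hgdef]
    exact hc2.clm_apply (hc6.clm_apply hc5)
  have hgnorm : ∀ δ : ContinuousMap (Set.Icc (t₀ - τ) t₀) (Fin m → ℝ), ∀ s,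
      ‖g δ s‖ ≤ MR * C₁ * ‖δ‖ := by
    intro δ s
    simp only [hgdef]
    have h1 : ‖(((fderiv ℝ F (Y φ (c s + τ), φ (pr (c s)))).comp
        (ContinuousLinearMap.inr ℝ (Fin m → ℝ) (Fin m → ℝ)))) (δ (pr (c s)))‖ ≤ C₁ * ‖δ‖ := by
      calc _ ≤ ‖(fderiv ℝ F (Y φ (c s + τ), φ (pr (c s)))).comp
            (ContinuousLinearMap.inr ℝ (Fin m → ℝ) (Fin m → ℝ))‖ * ‖δ (pr (c s))‖ :=
          ContinuousLinearMap.le_opNorm _ _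
        _ ≤ C₁ * ‖δ‖ := by
            apply mul_le_mul
            · exact le_trans (norm_comp_inr_le _) (hD1 _)
            · exact δ.norm_coe_le_norm _
            · exact norm_nonneg _
            · exact hC₁0
    calc ‖(S (c s + τ)) _‖ ≤ ‖S (c s + τ)‖ * ‖_‖ := ContinuousLinearMap.le_opNorm _ _
      _ ≤ MR * (C₁ * ‖δ‖) := by
          apply mul_le_mul (hSb _ (hplus s)) h1 (norm_nonneg _) hMR0.le
      _ = MR * C₁ * ‖δ‖ := by ring
  -- FTC: derivative of the integral term
  have hJd : ∀ δ : ContinuousMap (Set.Icc (t₀ - τ) t₀) (Fin m → ℝ), ∀ r : ℝ,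
      HasDerivAt (fun v => ∫ ζ in (ξ - τ)..(v - τ), g δ ζ) (g δ (r - τ)) r := by
    intro δ r
    have h1 := ((hgcont δ).integral_hasStrictDerivAt (ξ - τ) (r - τ)).hasDerivAt
    have h2 : HasDerivAt (fun v : ℝ => v - τ) 1 r := (hasDerivAt_id r).sub_const τ
    have h3 := h1.scomp r h2
    simpa [Function.comp_def] using h3
  -- derivative of zl r = R r (∫ …)
  have hzd : ∀ δ : ContinuousMap (Set.Icc (t₀ - τ) t₀) (Fin m → ℝ), ∀ u ∈ Icc ξ t,
      HasDerivWithinAt (fun r => R r (∫ ζ in (ξ - τ)..(r - τ), g δ ζ))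
        (A u (R u (∫ ζ in (ξ - τ)..(u - τ), g δ ζ))
          + ((fderiv ℝ F (Y φ u, w φ u)).comp
              (ContinuousLinearMap.inr ℝ (Fin m → ℝ) (Fin m → ℝ))) (w δ u))
        (Icc t₀ (t₀ + τ)) u := by
    intro δ u hu
    have huI : u ∈ Icc t₀ (t₀ + τ) := hsub hu
    have h1 := (hRd' u huI).clm_apply ((hJd δ u).hasDerivWithinAt)
    have hmem' : u - τ ∈ Icc (ξ - τ) (t - τ) := ⟨by linarith [hu.1], by linarith [hu.2]⟩
    have h2 : g δ (u - τ) = (S u) (((fderiv ℝ F (Y φ u, w φ u)).comp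
        (ContinuousLinearMap.inr ℝ (Fin m → ℝ) (Fin m → ℝ))) (w δ u)) := by
      simp only [hgdef]
      rw [hceq _ hmem']
      have he : u - τ + τ = u := by ring
      rw [he, ← hweq φ u huI, ← hweq δ u huI]
    have h3 : R u (g δ (u - τ)) = ((fderiv ℝ F (Y φ u, w φ u)).comp
        (ContinuousLinearMap.inr ℝ (Fin m → ℝ) (Fin m → ℝ))) (w δ u) := by
      rw [h2, ← ContinuousLinearMap.comp_apply, hRS u huI, ContinuousLinearMap.id_apply]
    rw [h3] at h1
    have h4 : ((A u).comp (R u)) (∫ ζ in (ξ - τ)..(u - τ), g δ ζ)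
        = A u (R u (∫ ζ in (ξ - τ)..(u - τ), g δ ζ)) := rfl
    rw [h4] at h1
    exact h1
  -- the linear map L
  have hJtadd : ∀ δ₁ δ₂ : ContinuousMap (Set.Icc (t₀ - τ) t₀) (Fin m → ℝ),
      (∫ ζ in (ξ - τ)..(t - τ), g (δ₁ + δ₂) ζ)
        = (∫ ζ in (ξ - τ)..(t - τ), g δ₁ ζ) + ∫ ζ in (ξ - τ)..(t - τ), g δ₂ ζ := by
    intro δ₁ δ₂
    rw [← intervalIntegral.integral_add ((hgcont δ₁).intervalIntegrable _ _)
      ((hgcont δ₂).intervalIntegrable _ _)]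
    apply intervalIntegral.integral_congr
    intro s _
    simp only [hgdef, ContinuousMap.add_apply, map_add]
  have hJtsmul : ∀ (a : ℝ) (δ : ContinuousMap (Set.Icc (t₀ - τ) t₀) (Fin m → ℝ)),
      (∫ ζ in (ξ - τ)..(t - τ), g (a • δ) ζ) = a • ∫ ζ in (ξ - τ)..(t - τ), g δ ζ := by
    intro a δ
    rw [← intervalIntegral.integral_smul]
    apply intervalIntegral.integral_congr
    intro s _
    simp only [hgdef, ContinuousMap.smul_apply, _root_.map_smul]
  set Llin : ContinuousMap (Set.Icc (t₀ - τ) t₀) (Fin m → ℝ) →ₗ[ℝ] (Fin m → ℝ) :=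
    { toFun := fun δ => R t (∫ ζ in (ξ - τ)..(t - τ), g δ ζ)
      map_add' := fun δ₁ δ₂ => by simp only [hJtadd, map_add]
      map_smul' := fun a δ => by
        simp only [hJtsmul, _root_.map_smul, RingHom.id_apply] } with hLlindef
  have hLbound : ∀ δ : ContinuousMap (Set.Icc (t₀ - τ) t₀) (Fin m → ℝ),
      ‖Llin δ‖ ≤ (MR * (MR * C₁ * τ)) * ‖δ‖ := by
    intro δ
    have hJtb : ‖∫ ζ in (ξ - τ)..(t - τ), g δ ζ‖ ≤ (MR * C₁ * ‖δ‖) * τ := by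
      have habs : |(t - τ) - (ξ - τ)| = t - ξ := by
        rw [show (t - τ) - (ξ - τ) = t - ξ by ring, abs_of_nonneg (by linarith)]
      calc ‖∫ ζ in (ξ - τ)..(t - τ), g δ ζ‖ ≤ (MR * C₁ * ‖δ‖) * |(t - τ) - (ξ - τ)| :=
            intervalIntegral.norm_integral_le_of_norm_le_const (fun s _ => hgnorm δ s)
        _ ≤ (MR * C₁ * ‖δ‖) * τ := by
            rw [habs]
            apply mul_le_mul_of_nonneg_left _ (by positivity)
            have := hξ.1; have := ht.2
            linarith
    have h1 : ‖Llin δ‖ ≤ ‖R t‖ * ‖∫ ζ in (ξ - τ)..(t - τ), g δ ζ‖ :=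
      ContinuousLinearMap.le_opNorm _ _
    calc ‖Llin δ‖ ≤ ‖R t‖ * ‖∫ ζ in (ξ - τ)..(t - τ), g δ ζ‖ := h1
      _ ≤ MR * ((MR * C₁ * ‖δ‖) * τ) := by
          apply mul_le_mul (hRb t htI) hJtb (norm_nonneg _) hMR0.le
      _ = (MR * (MR * C₁ * τ)) * ‖δ‖ := by ring
  set L : ContinuousMap (Set.Icc (t₀ - τ) t₀) (Fin m → ℝ) →L[ℝ] (Fin m → ℝ) :=
    Llin.mkContinuous ((MR * (MR * C₁ * τ))) hLbound with hLdef
  have hLapply : ∀ δ : ContinuousMap (Set.Icc (t₀ - τ) t₀) (Fin m → ℝ),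
      L δ = R t (∫ ζ in (ξ - τ)..(t - τ), g δ ζ) := fun δ => rfl
  -- estimate (a)
  have hD0 : 0 ≤ gronwallBound 0 C₁ C₁ τ := gb_nonneg hC₁0 hC₁0 hτ.le
  have est1 : ∀ δ : ContinuousMap (Set.Icc (t₀ - τ) t₀) (Fin m → ℝ), ∀ u ∈ Icc ξ t,
      ‖Y (φ + δ) u - Y φ u‖ ≤ gronwallBound 0 C₁ C₁ τ * ‖δ‖ := by
    intro δ
    have hEd : ∀ u ∈ Icc ξ t, HasDerivWithinAt (fun r => Y (φ + δ) r - Y φ r)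
        (f (Y (φ + δ) u) (w (φ + δ) u) - f (Y φ u) (w φ u)) (Icc t₀ (t₀ + τ)) u :=
      fun u hu => (hyd (φ + δ) u (hsub hu)).sub (hyd φ u (hsub hu))
    have hbnd : ∀ u ∈ Ico ξ t, ‖f (Y (φ + δ) u) (w (φ + δ) u) - f (Y φ u) (w φ u)‖
        ≤ C₁ * ‖Y (φ + δ) u - Y φ u‖ + C₁ * ‖δ‖ := by
      intro u hu
      have huI : u ∈ Icc t₀ (t₀ + τ) := hsub (Ico_subset_Icc_self hu)
      have h1 : f (Y (φ + δ) u) (w (φ + δ) u) - f (Y φ u) (w φ u)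
          = F (Y (φ + δ) u, w (φ + δ) u) - F (Y φ u, w φ u) := by rw [hFdef]; rfl
      rw [h1]
      have h2 := hlipF (Y (φ + δ) u, w (φ + δ) u) (Y φ u, w φ u)
      have hwd : w (φ + δ) u - w φ u = w δ u := by
        rw [hwsub (φ + δ) φ u, add_sub_cancel_left]
      have h3 : ‖((Y (φ + δ) u, w (φ + δ) u) : (Fin m → ℝ) × (Fin m → ℝ)) - (Y φ u, w φ u)‖
          ≤ ‖Y (φ + δ) u - Y φ u‖ + ‖δ‖ := by
        rw [Prod.mk_sub_mk]
        rw [show ‖((Y (φ + δ) u - Y φ u, w (φ + δ) u - w φ u) :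
          (Fin m → ℝ) × (Fin m → ℝ))‖ = max ‖Y (φ + δ) u - Y φ u‖ ‖w (φ + δ) u - w φ u‖ from rfl]
        apply max_le
        · exact le_add_of_nonneg_right (norm_nonneg _)
        · rw [hwd]
          exact le_add_of_nonneg_left (norm_nonneg _) |>.trans
            (by exact add_le_add_right (hwnorm δ u) _)
      calc ‖F (Y (φ + δ) u, w (φ + δ) u) - F (Y φ u, w φ u)‖
          ≤ C₁ * ‖((Y (φ + δ) u, w (φ + δ) u) : (Fin m → ℝ) × (Fin m → ℝ)) - (Y φ u, w φ u)‖ := h2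
        _ ≤ C₁ * (‖Y (φ + δ) u - Y φ u‖ + ‖δ‖) := mul_le_mul_of_nonneg_left h3 hC₁0
        _ = C₁ * ‖Y (φ + δ) u - Y φ u‖ + C₁ * ‖δ‖ := mul_add _ _ _
    have hgr := gron_helper hξ.1 ht.2 hEd hbnd
    intro u hu
    have h4 := hgr u hu
    have h5 : Y (φ + δ) ξ - Y φ ξ = 0 := by rw [hy0 (φ + δ), hy0 φ, sub_self]
    rw [h5, norm_zero] at h4
    calc ‖Y (φ + δ) u - Y φ u‖ ≤ gronwallBound 0 C₁ (C₁ * ‖δ‖) (u - ξ) := h4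
      _ = ‖δ‖ * gronwallBound 0 C₁ C₁ (u - ξ) := by
          rw [show C₁ * ‖δ‖ = ‖δ‖ * C₁ from mul_comm _ _, gb_smul]
      _ ≤ ‖δ‖ * gronwallBound 0 C₁ C₁ τ := by
          apply mul_le_mul_of_nonneg_left _ (norm_nonneg _)
          exact gb_mono hC₁0 hC₁0 (by have := hu.2; have := hξ.1; have := ht.2; linarith)
      _ = gronwallBound 0 C₁ C₁ τ * ‖δ‖ := mul_comm _ _
  -- estimate (b)
  have hfF : ∀ a b : Fin m → ℝ, f a b = F (a, b) := fun a b => by rw [hFdef]; rfl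
  have hCq0 : 0 ≤ gronwallBound 0 C₁ (C₂ * (gronwallBound 0 C₁ C₁ τ + 1) ^ 2) τ :=
    gb_nonneg hC₁0 (by positivity) hτ.le
  have est2 : ∀ δ : ContinuousMap (Set.Icc (t₀ - τ) t₀) (Fin m → ℝ),
      ‖Y (φ + δ) t - Y φ t - R t (∫ ζ in (ξ - τ)..(t - τ), g δ ζ)‖
        ≤ gronwallBound 0 C₁ (C₂ * (gronwallBound 0 C₁ C₁ τ + 1) ^ 2) τ * ‖δ‖ ^ 2 := by
    intro δ
    have hEd : ∀ u ∈ Icc ξ t, HasDerivWithinAt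
        (fun r => Y (φ + δ) r - Y φ r - R r (∫ ζ in (ξ - τ)..(r - τ), g δ ζ))
        (f (Y (φ + δ) u) (w (φ + δ) u) - f (Y φ u) (w φ u)
          - (A u (R u (∫ ζ in (ξ - τ)..(u - τ), g δ ζ))
            + ((fderiv ℝ F (Y φ u, w φ u)).comp
                (ContinuousLinearMap.inr ℝ (Fin m → ℝ) (Fin m → ℝ))) (w δ u)))
        (Icc t₀ (t₀ + τ)) u :=
      fun u hu => ((hyd (φ + δ) u (hsub hu)).sub (hyd φ u (hsub hu))).sub (hzd δ u hu)
    have hbnd : ∀ u ∈ Ico ξ t,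
        ‖f (Y (φ + δ) u) (w (φ + δ) u) - f (Y φ u) (w φ u)
          - (A u (R u (∫ ζ in (ξ - τ)..(u - τ), g δ ζ))
            + ((fderiv ℝ F (Y φ u, w φ u)).comp
                (ContinuousLinearMap.inr ℝ (Fin m → ℝ) (Fin m → ℝ))) (w δ u))‖
        ≤ C₁ * ‖Y (φ + δ) u - Y φ u - R u (∫ ζ in (ξ - τ)..(u - τ), g δ ζ)‖
          + C₂ * (gronwallBound 0 C₁ C₁ τ + 1) ^ 2 * ‖δ‖ ^ 2 := by
      intro u hu
      have huI : u ∈ Icc t₀ (t₀ + τ) := hsub (Ico_subset_Icc_self hu)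
      have huxt : u ∈ Icc ξ t := Ico_subset_Icc_self hu
      have hwd : w (φ + δ) u - w φ u = w δ u := by
        rw [hwsub (φ + δ) φ u, add_sub_cancel_left]
      have hpq : ((Y φ u, w φ u) : (Fin m → ℝ) × (Fin m → ℝ))
          + (Y (φ + δ) u - Y φ u, w δ u) = (Y (φ + δ) u, w (φ + δ) u) := by
        have ha1 : Y φ u + (Y (φ + δ) u - Y φ u) = Y (φ + δ) u := by abel
        have ha2 : w φ u + w δ u = w (φ + δ) u := by
          rw [← hwd]
          abel
        rw [Prod.mk_add_mk, ha1, ha2]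
      have htay := taylor_sq_bound hdF hdF' hD2 (Y φ u, w φ u) (Y (φ + δ) u - Y φ u, w δ u)
      rw [hpq] at htay
      have hdec : fderiv ℝ F (Y φ u, w φ u) ((Y (φ + δ) u - Y φ u, w δ u))
          = A u (Y (φ + δ) u - Y φ u)
            + ((fderiv ℝ F (Y φ u, w φ u)).comp
                (ContinuousLinearMap.inr ℝ (Fin m → ℝ) (Fin m → ℝ))) (w δ u) := by
        rw [fderiv_pair_decomp]
      have hq1 : ‖Y (φ + δ) u - Y φ u‖ ≤ gronwallBound 0 C₁ C₁ τ * ‖δ‖ := est1 δ u huxt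
      have hq2 : ‖w δ u‖ ≤ ‖δ‖ := hwnorm δ u
      have hqn : ‖((Y (φ + δ) u - Y φ u, w δ u) : (Fin m → ℝ) × (Fin m → ℝ))‖
          ≤ (gronwallBound 0 C₁ C₁ τ + 1) * ‖δ‖ := by
        rw [show ‖((Y (φ + δ) u - Y φ u, w δ u) : (Fin m → ℝ) × (Fin m → ℝ))‖
          = max ‖Y (φ + δ) u - Y φ u‖ ‖w δ u‖ from rfl]
        apply max_le
        · refine le_trans hq1 (mul_le_mul_of_nonneg_right (by linarith) (norm_nonneg _))
        · refine le_trans hq2 (le_mul_of_one_le_left (norm_nonneg _) (by linarith))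
      have hval : f (Y (φ + δ) u) (w (φ + δ) u) - f (Y φ u) (w φ u)
            - (A u (R u (∫ ζ in (ξ - τ)..(u - τ), g δ ζ))
              + ((fderiv ℝ F (Y φ u, w φ u)).comp
                  (ContinuousLinearMap.inr ℝ (Fin m → ℝ) (Fin m → ℝ))) (w δ u))
          = (F (Y (φ + δ) u, w (φ + δ) u) - F (Y φ u, w φ u)
              - fderiv ℝ F (Y φ u, w φ u) ((Y (φ + δ) u - Y φ u, w δ u)))
            + A u (Y (φ + δ) u - Y φ u - R u (∫ ζ in (ξ - τ)..(u - τ), g δ ζ)) := by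
        have hAsplit : A u (Y (φ + δ) u - Y φ u - R u (∫ ζ in (ξ - τ)..(u - τ), g δ ζ))
            = A u (Y (φ + δ) u - Y φ u) - A u (R u (∫ ζ in (ξ - τ)..(u - τ), g δ ζ)) :=
          map_sub _ _ _
        rw [hfF (Y (φ + δ) u) (w (φ + δ) u), hfF (Y φ u) (w φ u), hdec, hAsplit]
        abel
      rw [hval]
      have hAu : ‖A u (Y (φ + δ) u - Y φ u - R u (∫ ζ in (ξ - τ)..(u - τ), g δ ζ))‖
          ≤ C₁ * ‖Y (φ + δ) u - Y φ u - R u (∫ ζ in (ξ - τ)..(u - τ), g δ ζ)‖ :=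
        le_trans (ContinuousLinearMap.le_opNorm _ _)
          (mul_le_mul_of_nonneg_right (hAnorm u) (norm_nonneg _))
      have hrem : ‖F (Y (φ + δ) u, w (φ + δ) u) - F (Y φ u, w φ u)
            - fderiv ℝ F (Y φ u, w φ u) ((Y (φ + δ) u - Y φ u, w δ u))‖
          ≤ C₂ * (gronwallBound 0 C₁ C₁ τ + 1) ^ 2 * ‖δ‖ ^ 2 := by
        refine le_trans htay ?_
        have hn0 : (0:ℝ) ≤ ‖((Y (φ + δ) u - Y φ u, w δ u) : (Fin m → ℝ) × (Fin m → ℝ))‖ :=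
          norm_nonneg _
        have hsq : ‖((Y (φ + δ) u - Y φ u, w δ u) : (Fin m → ℝ) × (Fin m → ℝ))‖
              * ‖((Y (φ + δ) u - Y φ u, w δ u) : (Fin m → ℝ) × (Fin m → ℝ))‖
            ≤ ((gronwallBound 0 C₁ C₁ τ + 1) * ‖δ‖) * ((gronwallBound 0 C₁ C₁ τ + 1) * ‖δ‖) :=
          mul_le_mul hqn hqn hn0 (by positivity)
        calc C₂ * ‖((Y (φ + δ) u - Y φ u, w δ u) : (Fin m → ℝ) × (Fin m → ℝ))‖
              * ‖((Y (φ + δ) u - Y φ u, w δ u) : (Fin m → ℝ) × (Fin m → ℝ))‖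
            ≤ C₂ * (((gronwallBound 0 C₁ C₁ τ + 1) * ‖δ‖) * ((gronwallBound 0 C₁ C₁ τ + 1) * ‖δ‖)) := by
              rw [mul_assoc]
              exact mul_le_mul_of_nonneg_left hsq hC₂0
          _ = C₂ * (gronwallBound 0 C₁ C₁ τ + 1) ^ 2 * ‖δ‖ ^ 2 := by ring
      calc ‖_ + _‖ ≤ ‖_‖ + ‖_‖ := norm_add_le _ _
        _ ≤ C₂ * (gronwallBound 0 C₁ C₁ τ + 1) ^ 2 * ‖δ‖ ^ 2
            + C₁ * ‖Y (φ + δ) u - Y φ u - R u (∫ ζ in (ξ - τ)..(u - τ), g δ ζ)‖ :=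
          add_le_add hrem hAu
        _ = C₁ * ‖Y (φ + δ) u - Y φ u - R u (∫ ζ in (ξ - τ)..(u - τ), g δ ζ)‖
            + C₂ * (gronwallBound 0 C₁ C₁ τ + 1) ^ 2 * ‖δ‖ ^ 2 := by ring
    have hgr := gron_helper hξ.1 ht.2 hEd hbnd
    have h4 := hgr t ⟨hxit, le_rfl⟩
    have h5 : Y (φ + δ) ξ - Y φ ξ - R ξ (∫ ζ in (ξ - τ)..(ξ - τ), g δ ζ) = 0 := by
      rw [hy0 (φ + δ), hy0 φ, intervalIntegral.integral_same, map_zero, sub_self, sub_zero]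
    rw [h5, norm_zero] at h4
    calc ‖Y (φ + δ) t - Y φ t - R t (∫ ζ in (ξ - τ)..(t - τ), g δ ζ)‖
        ≤ gronwallBound 0 C₁ (C₂ * (gronwallBound 0 C₁ C₁ τ + 1) ^ 2 * ‖δ‖ ^ 2) (t - ξ) := h4
      _ = ‖δ‖ ^ 2 * gronwallBound 0 C₁ (C₂ * (gronwallBound 0 C₁ C₁ τ + 1) ^ 2) (t - ξ) := by
          rw [show C₂ * (gronwallBound 0 C₁ C₁ τ + 1) ^ 2 * ‖δ‖ ^ 2
            = ‖δ‖ ^ 2 * (C₂ * (gronwallBound 0 C₁ C₁ τ + 1) ^ 2) from by ring, gb_smul]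
      _ ≤ ‖δ‖ ^ 2 * gronwallBound 0 C₁ (C₂ * (gronwallBound 0 C₁ C₁ τ + 1) ^ 2) τ := by
          apply mul_le_mul_of_nonneg_left _ (by positivity)
          exact gb_mono hC₁0 (by positivity) (by have := hξ.1; have := ht.2; linarith)
      _ = gronwallBound 0 C₁ (C₂ * (gronwallBound 0 C₁ C₁ τ + 1) ^ 2) τ * ‖δ‖ ^ 2 :=
          mul_comm _ _
  -- Fréchet differentiability
  have hFder : HasFDerivAt (fun ψ => Y ψ t) L φ := by
    rw [hasFDerivAt_iff_isLittleO_nhds_zero, Asymptotics.isLittleO_iff]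
    intro ce hce
    rw [Metric.eventually_nhds_iff]
    refine ⟨ce / (gronwallBound 0 C₁ (C₂ * (gronwallBound 0 C₁ C₁ τ + 1) ^ 2) τ + 1),
      by positivity, fun δ hδ => ?_⟩
    rw [dist_zero_right] at hδ
    have h3 : ‖δ‖ * (gronwallBound 0 C₁ (C₂ * (gronwallBound 0 C₁ C₁ τ + 1) ^ 2) τ + 1) ≤ ce :=
      (le_div_iff₀ (by positivity)).1 hδ.le
    calc ‖Y (φ + δ) t - Y φ t - L δ‖
        = ‖Y (φ + δ) t - Y φ t - R t (∫ ζ in (ξ - τ)..(t - τ), g δ ζ)‖ := by rw [hLapply]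
      _ ≤ gronwallBound 0 C₁ (C₂ * (gronwallBound 0 C₁ C₁ τ + 1) ^ 2) τ * ‖δ‖ ^ 2 := est2 δ
      _ ≤ ce * ‖δ‖ := by nlinarith [norm_nonneg δ, hCq0, sq_nonneg ‖δ‖]
  -- assembly
  refine ⟨fun v r => (R v).comp (S r), fun r hr => ⟨hRS r hr, ?_⟩, L, hFder, ?_⟩
  · intro u hu
    have hconst : HasDerivWithinAt (fun _ : ℝ => S r)
        (0 : (Fin m → ℝ) →L[ℝ] (Fin m → ℝ)) (Icc t₀ (t₀ + τ)) u :=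
      hasDerivWithinAt_const _ _ _
    have h1 : HasDerivWithinAt (fun v => (R v).comp (S r))
        (((A u).comp (R u)).comp (S r)
          + (R u).comp (0 : (Fin m → ℝ) →L[ℝ] (Fin m → ℝ)))
        (Icc t₀ (t₀ + τ)) u := (hRd' u hu).clm_comp hconst
    have h2 : ((A u).comp (R u)).comp (S r)
          + (R u).comp (0 : (Fin m → ℝ) →L[ℝ] (Fin m → ℝ))
        = (A u).comp ((R u).comp (S r)) := by
      rw [ContinuousLinearMap.comp_zero, add_zero, ContinuousLinearMap.comp_assoc]
    rw [h2] at h1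
    have h3 : fderiv ℝ (fun z => f z
        (if hu' : u - τ ∈ Set.Icc (t₀ - τ) t₀ then φ ⟨u - τ, hu'⟩ else 0)) (Y φ u) = A u := by
      rw [hAeq u]
    rw [h3]
    exact h1
  · intro δφ
    rw [hLapply δφ,
      ← ContinuousLinearMap.intervalIntegral_comp_comm (R t) ((hgcont δφ).intervalIntegrable _ _)]
    apply intervalIntegral.integral_congr
    intro s hs
    have hs' : s ∈ Icc (ξ - τ) (t - τ) := by rwa [uIcc_of_le hxt'] at hs
    have hsmem : s ∈ Set.Icc (t₀ - τ) t₀ := hzmem s hs'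
    have h2 : fderiv ℝ (fun w' => f (Y φ (s + τ)) w') (φ ⟨s, hsmem⟩)
        = (fderiv ℝ F (Y φ (s + τ), φ ⟨s, hsmem⟩)).comp
            (ContinuousLinearMap.inr ℝ (Fin m → ℝ) (Fin m → ℝ)) := by
      have h := (hasFDerivAt_comp_inr hdF (Y φ (s + τ)) (φ ⟨s, hsmem⟩)).fderiv
      rw [hfunr (Y φ (s + τ))] at h
      exact h
    have hpr : pr s = ⟨s, hsmem⟩ := by
      simp only [hprdef]
      exact Set.projIcc_of_mem hle hsmem
    simp only [hgdef]
    rw [hceq s hs', dif_pos hsmem, dif_pos hsmem, h2, hpr]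
    rfl
end
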